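/- arXiv:1707.02507 — 4 statements merged into one kernel-verified Lean document; each statement's English description precedes it below -/
import Mathlib

section
/- Let f : [0,1] → ℝ and let G be its graph G = {(t, f(t)) : t ∈ [0,1]} ⊆ ℝ². Suppose there exist a constant A > 0 and sequences a_i ∈ ℝ², R_i ∈ (0,1), and positive integers n_i with n_i → ∞, such that for every i the number of rectangles in the n_i × n_i grid partition of the square a_i + [0,R_i]² (i.e. the partition into n_i² congruent subsquares of side R_i/n_i) that intersect G is at least A·n_i². Then the Assouad dimension of G equals 2; equivalently, for every s < 2, G is not s-homogeneous: for every C > 0 there exist x ∈ G and 0 < r ≤ R such that the smallest number of sets of diameter at most r needed to cover B(x,R) ∩ G exceeds C·(R/r)^s. -/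
open MeasureTheory Metric Set Filter

lemma coord_dist_le (x y : EuclideanSpace ℝ (Fin 2)) (k : Fin 2) : |x k - y k| ≤ dist x y := by
  rw [EuclideanSpace.dist_eq, ← Real.sqrt_sq (abs_nonneg (x k - y k))]
  apply Real.sqrt_le_sqrt
  rw [sq_abs]
  have h : (x k - y k) ^ 2 = dist (x k) (y k) ^ 2 := by rw [Real.dist_eq, sq_abs]
  rw [h]
  exact Finset.single_le_sum (f := fun i => dist (x i) (y i) ^ 2) (fun i _ => sq_nonneg _) (Finset.mem_univ k)

lemma dist_le_two_mul (x y : EuclideanSpace ℝ (Fin 2)) (c : ℝ) (hc : 0 ≤ c)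
    (h0 : |x 0 - y 0| ≤ c) (h1 : |x 1 - y 1| ≤ c) : dist x y ≤ 2 * c := by
  rw [EuclideanSpace.dist_eq, Fin.sum_univ_two]
  have key : dist (x 0) (y 0) ^ 2 + dist (x 1) (y 1) ^ 2 ≤ (2 * c) ^ 2 := by
    rw [Real.dist_eq, Real.dist_eq]
    nlinarith [abs_nonneg (x 0 - y 0), abs_nonneg (x 1 - y 1), sq_abs (x 0 - y 0), sq_abs (x 1 - y 1)]
  calc Real.sqrt (dist (x 0) (y 0) ^ 2 + dist (x 1) (y 1) ^ 2) ≤ Real.sqrt ((2*c)^2) :=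
        Real.sqrt_le_sqrt key
    _ = 2 * c := Real.sqrt_sq (by linarith)

lemma sep_lemma {u a0 i k q1 q2 : ℝ} (hu : 0 < u)
    (h1 : a0 + i * u ≤ q1) (h2 : q1 ≤ a0 + (i + 1) * u)
    (h3 : a0 + k * u ≤ q2) (h4 : q2 ≤ a0 + (k + 1) * u)
    (hd : |q1 - q2| ≤ u) : |i - k| ≤ 2 := by
  rw [abs_le] at hd ⊢
  constructor <;> nlinarith

/-- The smallest number of sets of diameter at most `r` needed to cover `E`
exceeds `m`: every finite cover of `E` by sets of diameter at most `r` has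
cardinality strictly greater than `m`. -/
def smallestCoverExceeds {X : Type*} [PseudoMetricSpace X] (E : Set X) (r : ℝ) (m : ℝ) : Prop :=
  ∀ 𝒰 : Finset (Set X), (∀ U ∈ 𝒰, EMetric.diam U ≤ ENNReal.ofReal r) →
    E ⊆ ⋃₀ (𝒰 : Set (Set X)) → m < (𝒰.card : ℝ)

/-- The rectangle of the `n × n` grid partition of the square `a + [0,R]²`
with grid indices `ij = (i, j)`. -/
def gridSquare (a : EuclideanSpace ℝ (Fin 2)) (R : ℝ) (n : ℕ) (ij : Fin n × Fin n) :
    Set (EuclideanSpace ℝ (Fin 2)) :=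
  {p | (a 0 + (ij.1 : ℝ) * R / n ≤ p 0 ∧ p 0 ≤ a 0 + ((ij.1 : ℝ) + 1) * R / n) ∧
       (a 1 + (ij.2 : ℝ) * R / n ≤ p 1 ∧ p 1 ≤ a 1 + ((ij.2 : ℝ) + 1) * R / n)}

/-- If there are `A > 0` and sequences `aᵢ ∈ ℝ²`, `Rᵢ ∈ (0,1)`, `nᵢ → ∞` such that the graph
`G` of `f : [0,1] → ℝ` meets at least `A nᵢ²` rectangles of the `nᵢ × nᵢ` grid partition of the
square `aᵢ + [0,Rᵢ]²`, then `G` has Assouad dimension `2`: for every `s < 2`, `G` is not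
`s`-homogeneous. -/
theorem assouad_of_grid_hitting (f : ℝ → ℝ) (G : Set (EuclideanSpace ℝ (Fin 2)))
    (hG : G = {p | ∃ t ∈ Icc (0 : ℝ) 1, p 0 = t ∧ p 1 = f t})
    (A : ℝ) (hA : 0 < A)
    (a : ℕ → EuclideanSpace ℝ (Fin 2)) (R : ℕ → ℝ) (n : ℕ → ℕ)
    (hR : ∀ i, R i ∈ Ioo (0 : ℝ) 1) (hnpos : ∀ i, 0 < n i)
    (hn : Tendsto n atTop atTop)
    (hcount : ∀ i, A * (n i : ℝ) ^ 2 ≤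
      (({ij : Fin (n i) × Fin (n i) | (gridSquare (a i) (R i) (n i) ij ∩ G).Nonempty}.ncard : ℝ))) :
    ∀ s < (2 : ℝ), ∀ C > (0 : ℝ), ∃ x ∈ G, ∃ R' r : ℝ, 0 < r ∧ r ≤ R' ∧
      smallestCoverExceeds (closedBall x R' ∩ G) r (C * (R' / r) ^ s) := by
  classical
  intro s hs C hC
  -- choose a large index i
  have h2s : 0 < 2 - s := by linarith
  have htend : Tendsto (fun i => (2 * (n i : ℝ)) ^ (s - 2)) atTop (nhds 0) := by
    have h1 : Tendsto (fun i => 2 * (n i : ℝ)) atTop atTop :=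
      (tendsto_natCast_atTop_atTop.comp hn).const_mul_atTop two_pos
    have h2 := (tendsto_rpow_neg_atTop h2s).comp h1
    simpa [neg_sub, Function.comp_def] using h2
  have hpos : (0:ℝ) < A / (100 * C) := by positivity
  obtain ⟨i, hi⟩ := (htend.eventually_lt_const hpos).exists
  obtain ⟨hR0, hR1⟩ := hR i
  have hm : 0 < n i := hnpos i
  have hmR : (0:ℝ) < R i / n i := by positivity
  have hmr : (0:ℝ) < (n i : ℝ) := by exact_mod_cast hm
  set H : Set (Fin (n i) × Fin (n i)) :=
    {ij | (gridSquare (a i) (R i) (n i) ij ∩ G).Nonempty} with hHdef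
  have hcnt := hcount i
  have hw : ∀ ij ∈ H, ∃ q, q ∈ gridSquare (a i) (R i) (n i) ij ∩ G := fun ij h => h
  choose! p hp using hw
  have hHne : H.Nonempty := by
    apply Set.nonempty_of_ncard_ne_zero
    intro h0
    rw [h0] at hcnt
    norm_num at hcnt
    nlinarith [mul_pos hA (pow_pos hmr 2)]
  obtain ⟨ij0, hij0⟩ := hHne
  -- coordinate bounds for points in grid squares
  have hcoord : ∀ ij : Fin (n i) × Fin (n i), ∀ q ∈ gridSquare (a i) (R i) (n i) ij,
      (a i 0 ≤ q 0 ∧ q 0 ≤ a i 0 + R i) ∧ (a i 1 ≤ q 1 ∧ q 1 ≤ a i 1 + R i) := by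
    intro ij q hq
    obtain ⟨⟨h1, h2⟩, h3, h4⟩ := hq
    have hi1 : ((ij.1 : ℝ) + 1) ≤ (n i : ℝ) := by
      have := ij.1.isLt; exact_mod_cast Nat.succ_le_of_lt this
    have hi2 : ((ij.2 : ℝ) + 1) ≤ (n i : ℝ) := by
      have := ij.2.isLt; exact_mod_cast Nat.succ_le_of_lt this
    have hn1 : (0:ℝ) ≤ (ij.1 : ℝ) := Nat.cast_nonneg _
    have hn2 : (0:ℝ) ≤ (ij.2 : ℝ) := Nat.cast_nonneg _
    have e1 : ((ij.1 : ℝ) + 1) * R i / n i ≤ R i := by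
      rw [div_le_iff₀ hmr]; nlinarith
    have e2 : ((ij.2 : ℝ) + 1) * R i / n i ≤ R i := by
      rw [div_le_iff₀ hmr]; nlinarith
    have f1 : (0:ℝ) ≤ (ij.1 : ℝ) * R i / n i := by positivity
    have f2 : (0:ℝ) ≤ (ij.2 : ℝ) * R i / n i := by positivity
    exact ⟨⟨by linarith, by linarith⟩, by linarith, by linarith⟩
  -- all witness points are in the ball of radius 2 R i around p ij0
  have hball : ∀ ij ∈ H, p ij ∈ closedBall (p ij0) (2 * R i) ∩ G := by
    intro ij hij
    refine ⟨?_, (hp ij hij).2⟩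
    rw [mem_closedBall]
    have c1 := hcoord ij (p ij) (hp ij hij).1
    have c2 := hcoord ij0 (p ij0) (hp ij0 hij0).1
    refine dist_le_two_mul _ _ (R i) hR0.le ?_ ?_ <;> rw [abs_le] <;>
      constructor <;> linarith [c1.1.1, c1.1.2, c1.2.1, c1.2.2, c2.1.1, c2.1.2, c2.2.1, c2.2.2]
  refine ⟨p ij0, (hp ij0 hij0).2, 2 * R i, R i / n i, hmR, ?_, ?_⟩
  · have : R i / n i ≤ R i := by
      rw [div_le_iff₀ hmr]; nlinarith [(show (1:ℝ) ≤ n i by exact_mod_cast hm)]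
    linarith
  intro 𝒰 hdiam hcov
  -- choose covering sets for the witness points
  have hU : ∀ ij ∈ H, ∃ U ∈ 𝒰, p ij ∈ U := by
    intro ij hij
    have := hcov (hball ij hij)
    rw [Set.mem_sUnion] at this
    obtain ⟨U, hU1, hU2⟩ := this
    exact ⟨U, hU1, hU2⟩
  choose! φ hφ1 hφ2 using hU
  set Hfin : Finset (Fin (n i) × Fin (n i)) := (Set.toFinite H).toFinset with hHfin
  have hcard : H.ncard = Hfin.card := Set.ncard_eq_toFinset_card _ _
  -- separation: two witness points in the same U have close grid indices
  have hfiber : ∀ U ∈ 𝒰, (Hfin.filter (fun ij => φ ij = U)).card ≤ 25 := by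
    intro U hUm
    set F := Hfin.filter (fun ij => φ ij = U) with hF
    rcases F.eq_empty_or_nonempty with h | ⟨kl0, hkl0⟩
    · simp [h]
    have hmemF : ∀ ij ∈ F, ij ∈ H ∧ p ij ∈ U := by
      intro ij hij
      rw [hF, Finset.mem_filter] at hij
      obtain ⟨h1, h2⟩ := hij
      rw [hHfin, Set.Finite.mem_toFinset] at h1
      exact ⟨h1, h2 ▸ hφ2 ij h1⟩
    have hsep : ∀ ij ∈ F, |(ij.1 : ℝ) - (kl0.1 : ℝ)| ≤ 2 ∧ |(ij.2 : ℝ) - (kl0.2 : ℝ)| ≤ 2 := by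
      intro ij hij
      obtain ⟨hijH, hijU⟩ := hmemF ij hij
      obtain ⟨hklH, hklU⟩ := hmemF kl0 hkl0
      have hed : edist (p ij) (p kl0) ≤ ENNReal.ofReal (R i / n i) :=
        le_trans (EMetric.edist_le_diam_of_mem hijU hklU) (hdiam U hUm)
      have hd : dist (p ij) (p kl0) ≤ R i / n i := by
        rw [edist_dist] at hed
        exact (ENNReal.ofReal_le_ofReal_iff hmR.le).1 hed
      obtain ⟨⟨g1, g2⟩, g3, g4⟩ := (hp ij hijH).1
      obtain ⟨⟨k1, k2⟩, k3, k4⟩ := (hp kl0 hklH).1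
      have d0 : |p ij 0 - p kl0 0| ≤ R i / n i := le_trans (coord_dist_le _ _ 0) hd
      have d1 : |p ij 1 - p kl0 1| ≤ R i / n i := le_trans (coord_dist_le _ _ 1) hd
      constructor
      · refine sep_lemma hmR (a0 := a i 0) ?_ ?_ ?_ ?_ d0 <;>
          rw [← mul_div_assoc] <;> assumption
      · refine sep_lemma hmR (a0 := a i 1) ?_ ?_ ?_ ?_ d1 <;>
          rw [← mul_div_assoc] <;> assumption
    -- inject into a 5 × 5 integer box
    have : F.card ≤ (Finset.Icc ((kl0.1 : ℤ) - 2) ((kl0.1 : ℤ) + 2) ×ˢ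
        Finset.Icc ((kl0.2 : ℤ) - 2) ((kl0.2 : ℤ) + 2)).card := by
      apply Finset.card_le_card_of_injOn (fun ij => ((ij.1 : ℤ), (ij.2 : ℤ)))
      · intro ij hij
        obtain ⟨s1, s2⟩ := hsep ij hij
        rw [Finset.mem_coe, Finset.mem_product, Finset.mem_Icc, Finset.mem_Icc]
        rw [abs_le] at s1 s2
        have h1 := s1.1; have h2 := s1.2; have h3 := s2.1; have h4 := s2.2
        refine ⟨⟨?_, ?_⟩, ?_, ?_⟩ <;> · rw [← @Int.cast_le ℝ]; push_cast; linarith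
      · intro x _ y _ hxy
        simp only [Prod.mk.injEq] at hxy
        have e1 : (x.1 : ℕ) = (y.1 : ℕ) := by exact_mod_cast hxy.1
        have e2 : (x.2 : ℕ) = (y.2 : ℕ) := by exact_mod_cast hxy.2
        exact Prod.ext (Fin.ext e1) (Fin.ext e2)
    calc F.card ≤ _ := this
      _ = 25 := by
        rw [Finset.card_product, Int.card_Icc, Int.card_Icc]
        have e1 : ((kl0.1:ℤ) + 2 + 1 - ((kl0.1:ℤ) - 2)).toNat = 5 := by omega
        have e2 : ((kl0.2:ℤ) + 2 + 1 - ((kl0.2:ℤ) - 2)).toNat = 5 := by omega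
        rw [e1, e2]
  have hmaps : ∀ ij ∈ Hfin, φ ij ∈ 𝒰 := by
    intro ij hij
    rw [hHfin, Set.Finite.mem_toFinset] at hij
    exact hφ1 ij hij
  have hmain : Hfin.card ≤ 25 * 𝒰.card :=
    Finset.card_le_mul_card_image_of_maps_to hmaps 25 hfiber
  -- arithmetic conclusion
  have hHcard : A * (n i : ℝ) ^ 2 ≤ (Hfin.card : ℝ) := by rw [← hcard]; exact hcnt
  have hUbig : A * (n i : ℝ) ^ 2 ≤ 25 * (𝒰.card : ℝ) := by
    calc A * (n i : ℝ) ^ 2 ≤ (Hfin.card : ℝ) := hHcard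
      _ ≤ 25 * (𝒰.card : ℝ) := by exact_mod_cast hmain
  have hratio : (2 * R i) / (R i / n i) = 2 * (n i : ℝ) := by
    field_simp
  rw [hratio]
  set T := 2 * (n i : ℝ) with hT
  have hTpos : (0:ℝ) < T := by positivity
  have hTs : T ^ s = T ^ (s - 2) * T ^ 2 := by
    rw [show (T:ℝ) ^ 2 = T ^ ((2:ℕ):ℝ) from (Real.rpow_natCast T 2).symm, ← Real.rpow_add hTpos]
    norm_num
  have hT2 : T ^ 2 = 4 * (n i : ℝ) ^ 2 := by rw [hT]; ring
  have key : C * T ^ s < A * (n i : ℝ) ^ 2 / 25 := by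
    rw [hTs, hT2]
    have step : T ^ (s - 2) * (4 * (n i : ℝ) ^ 2) < A / (100 * C) * (4 * (n i : ℝ) ^ 2) :=
      mul_lt_mul_of_pos_right hi (by positivity)
    have := mul_lt_mul_of_pos_left step hC
    calc C * (T ^ (s - 2) * (4 * (n i : ℝ) ^ 2)) < C * (A / (100 * C) * (4 * (n i : ℝ) ^ 2)) := this
      _ = A * (n i : ℝ) ^ 2 / 25 := by field_simp; ring
  linarith
end

section
/- Let d ≥ 1 and let E ⊆ ℝ^d be a nonempty bounded set. Suppose there exist a constant A > 0 and sequences a_i ∈ ℝ^d, R_i ∈ (0,1), and positive integers n_i with n_i → ∞, such that for every i the number of cubes in the partition of the cube a_i + [0,R_i]^d into n_i^d congruent subcubes of side R_i/n_i that intersect E is at least A·n_i^d. Then the Assouad dimension of E equals d; equivalently, for every s < d and every C > 0 there exist x ∈ E and 0 < r ≤ R such that the smallest number of sets of diameter at most r needed to cover B(x,R) ∩ E exceeds C·(R/r)^s. -/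
open MeasureTheory Metric Set Filter

/-- The subcube of the partition of the cube `a + [0,R]^d` into `n^d` congruent subcubes of
side `R/n`, with grid indices `ι : Fin d → Fin n`. -/
def gridCube (d : ℕ) (a : EuclideanSpace ℝ (Fin d)) (R : ℝ) (n : ℕ) (ι : Fin d → Fin n) :
    Set (EuclideanSpace ℝ (Fin d)) :=
  {p | ∀ j : Fin d, a j + (ι j : ℝ) * R / n ≤ p j ∧ p j ≤ a j + ((ι j : ℝ) + 1) * R / n}

lemma gridCube_coord {d m : ℕ} {a : EuclideanSpace ℝ (Fin d)} {R₀ : ℝ} (hR : 0 < R₀)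
    {ι : Fin d → Fin m} {p : EuclideanSpace ℝ (Fin d)} (hp : p ∈ gridCube d a R₀ m ι)
    (j : Fin d) : a j ≤ p j ∧ p j ≤ a j + R₀ := by
  obtain ⟨h1, h2⟩ := hp j
  have hm : 0 < m := (ι j).pos
  have hmR : (0:ℝ) < (m:ℝ) := by exact_mod_cast hm
  constructor
  · have : 0 ≤ (ι j : ℝ) * R₀ / m := by positivity
    linarith
  · have h3 : ((ι j : ℝ) + 1) ≤ (m:ℝ) := by exact_mod_cast (ι j).2
    have : ((ι j : ℝ) + 1) * R₀ / m ≤ R₀ := by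
      rw [div_le_iff₀ hmR]
      nlinarith
    linarith

lemma fiber_ncard_le {d m : ℕ} {a : EuclideanSpace ℝ (Fin d)} {R₀ : ℝ} (hR : 0 < R₀)
    (hm : 0 < m) (U : Set (EuclideanSpace ℝ (Fin d)))
    (hU : EMetric.diam U ≤ ENNReal.ofReal (R₀ / m)) :
    {ι : Fin d → Fin m | (gridCube d a R₀ m ι ∩ U).Nonempty}.ncard ≤ 5 ^ d := by
  classical
  set S := {ι : Fin d → Fin m | (gridCube d a R₀ m ι ∩ U).Nonempty} with hSdef
  rcases S.eq_empty_or_nonempty with h | ⟨ι₀, hι₀⟩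
  · simp [h]
  · obtain ⟨p₀, hp₀g, hp₀U⟩ := hι₀
    have hmR : (0:ℝ) < (m:ℝ) := by exact_mod_cast hm
    have hu : (0:ℝ) < R₀ / m := by positivity
    have key : ∀ ι ∈ S, ∀ j : Fin d, (ι j : ℤ) - (ι₀ j : ℤ) ∈ Finset.Icc (-2 : ℤ) 2 := by
      rintro ι ⟨p, hpg, hpU⟩ j
      have hd' : dist p p₀ ≤ R₀ / m :=
        (edist_le_ofReal hu.le).1 ((EMetric.edist_le_diam_of_mem hpU hp₀U).trans hU)
      have hcoord : dist (p j) (p₀ j) ≤ dist p p₀ := by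
        rw [EuclideanSpace.dist_eq]
        have h1 : dist (p j) (p₀ j) ^ 2 ≤ ∑ k, dist (p k) (p₀ k) ^ 2 :=
          Finset.single_le_sum (f := fun k => dist (p k) (p₀ k) ^ 2)
            (fun k _ => by positivity) (Finset.mem_univ j)
        calc dist (p j) (p₀ j) = Real.sqrt (dist (p j) (p₀ j) ^ 2) :=
              (Real.sqrt_sq dist_nonneg).symm
          _ ≤ _ := Real.sqrt_le_sqrt h1
      have habs : |p j - p₀ j| ≤ R₀ / m := by
        rw [← Real.dist_eq]; exact hcoord.trans hd'
      rw [abs_le] at habs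
      obtain ⟨h1, h2⟩ := hpg j
      obtain ⟨h3, h4⟩ := hp₀g j
      rw [mul_div_assoc] at h1 h2 h3 h4
      have e1 : (ι j : ℝ) ≤ (ι₀ j : ℝ) + 2 := by nlinarith [habs.1, habs.2]
      have e2 : (ι₀ j : ℝ) ≤ (ι j : ℝ) + 2 := by nlinarith [habs.1, habs.2]
      rw [Finset.mem_Icc]
      constructor
      · have : ((ι₀ j : ℕ) : ℝ) ≤ ((ι j : ℕ) : ℝ) + 2 := e2
        have : ((ι₀ j : ℕ) : ℤ) ≤ ((ι j : ℕ) : ℤ) + 2 := by exact_mod_cast this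
        omega
      · have : ((ι j : ℕ) : ℝ) ≤ ((ι₀ j : ℕ) : ℝ) + 2 := e1
        have : ((ι j : ℕ) : ℤ) ≤ ((ι₀ j : ℕ) : ℤ) + 2 := by exact_mod_cast this
        omega
    set g : (Fin d → Fin m) → (Fin d → ℤ) := fun ι j => (ι j : ℤ) - (ι₀ j : ℤ) with hg
    have hinj : Set.InjOn g S := by
      intro ι _ ι' _ h
      funext j
      have := congrFun h j
      simp only [hg] at this
      have : ((ι j : ℕ) : ℤ) = ((ι' j : ℕ) : ℤ) := by omega
      exact Fin.ext (by exact_mod_cast this)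
    calc S.ncard = (g '' S).ncard := (Set.ncard_image_of_injOn hinj).symm
      _ ≤ (((Fintype.piFinset fun _ : Fin d => Finset.Icc (-2:ℤ) 2) : Finset (Fin d → ℤ)) :
            Set (Fin d → ℤ)).ncard := by
          apply Set.ncard_le_ncard ?_ (Finset.finite_toSet _)
          rintro _ ⟨ι, hι, rfl⟩
          simp only [Finset.coe_sort_coe, Finset.mem_coe, Fintype.mem_piFinset]
          exact fun j => key ι hι j
      _ = 5 ^ d := by
          rw [Set.ncard_coe_finset, Fintype.card_piFinset]
          simp

/-- If `E ⊆ ℝᵈ` is nonempty and bounded and there are `A > 0` and sequences `aᵢ ∈ ℝᵈ`,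
`Rᵢ ∈ (0,1)`, `nᵢ → ∞` such that `E` meets at least `A nᵢᵈ` subcubes of the partition of the
cube `aᵢ + [0,Rᵢ]ᵈ` into `nᵢᵈ` congruent subcubes, then `E` has Assouad dimension `d`:
for every `s < d`, `E` is not `s`-homogeneous. -/
theorem assouad_of_grid_hitting_higher (d : ℕ) (hd : 1 ≤ d)
    (E : Set (EuclideanSpace ℝ (Fin d))) (hEne : E.Nonempty) (hEb : Bornology.IsBounded E)
    (A : ℝ) (hA : 0 < A)
    (a : ℕ → EuclideanSpace ℝ (Fin d)) (R : ℕ → ℝ) (n : ℕ → ℕ)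
    (hR : ∀ i, R i ∈ Ioo (0 : ℝ) 1) (hnpos : ∀ i, 0 < n i)
    (hn : Tendsto n atTop atTop)
    (hcount : ∀ i, A * (n i : ℝ) ^ d ≤
      (({ι : Fin d → Fin (n i) | (gridCube d (a i) (R i) (n i) ι ∩ E).Nonempty}.ncard : ℝ))) :
    ∀ s < (d : ℝ), ∀ C > (0 : ℝ), ∃ x ∈ E, ∃ R' r : ℝ, 0 < r ∧ r ≤ R' ∧
      smallestCoverExceeds (closedBall x R' ∩ E) r (C * (R' / r) ^ s) := by
  classical
  intro s hs C hC
  set t := max s 0 with ht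
  have ht0 : 0 ≤ t := le_max_right _ _
  have hd0 : (0:ℝ) < d := by exact_mod_cast hd
  have htd : t < d := max_lt hs hd0
  have hKt : Tendsto (fun i => ((n i : ℝ)) ^ ((d:ℝ) - t)) atTop atTop :=
    (tendsto_rpow_atTop (by linarith)).comp (tendsto_natCast_atTop_atTop.comp hn)
  set K := 5 ^ d * C * (Real.sqrt d) ^ t / A with hKdef
  obtain ⟨i, hiK, hi1⟩ := ((hKt.eventually_gt_atTop K).and (hn.eventually_ge_atTop 1)).exists
  set m := n i with hmdef
  set R₀ := R i with hRdef
  obtain ⟨hR0, hR1⟩ := hR i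
  have hm0 : 0 < m := hnpos i
  have hmR : (0:ℝ) < (m:ℝ) := by exact_mod_cast hm0
  have hm1 : (1:ℝ) ≤ (m:ℝ) := by exact_mod_cast hi1
  have hsq1 : (1:ℝ) ≤ Real.sqrt d := by
    rw [show (1:ℝ) = Real.sqrt 1 by simp]
    exact Real.sqrt_le_sqrt (by exact_mod_cast hd)
  have hcnt := hcount i
  have hSne : {ι : Fin d → Fin m | (gridCube d (a i) R₀ m ι ∩ E).Nonempty}.Nonempty := by
    by_contra h
    rw [Set.not_nonempty_iff_eq_empty] at h
    rw [h] at hcnt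
    simp only [Set.ncard_empty, Nat.cast_zero] at hcnt
    have : (0:ℝ) < A * (m:ℝ)^d := by positivity
    linarith
  obtain ⟨ι₀, p₀, hp₀g, hp₀E⟩ := hSne
  refine ⟨p₀, hp₀E, Real.sqrt d * R₀, R₀ / m, by positivity, ?_, ?_⟩
  · have h1 : R₀ / m ≤ R₀ := by
      rw [div_le_iff₀ hmR]; nlinarith
    nlinarith
  · intro 𝒰 hdiam hcover
    have hball : ∀ ι : Fin d → Fin m, ∀ p ∈ gridCube d (a i) R₀ m ι,
        p ∈ closedBall p₀ (Real.sqrt d * R₀) := by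
      intro ι p hp
      rw [mem_closedBall, EuclideanSpace.dist_eq]
      have h1 : ∀ j, dist (p j) (p₀ j) ≤ R₀ := by
        intro j
        obtain ⟨l1, l2⟩ := gridCube_coord hR0 hp j
        obtain ⟨l3, l4⟩ := gridCube_coord hR0 hp₀g j
        rw [Real.dist_eq, abs_le]
        constructor <;> linarith
      calc Real.sqrt (∑ j, dist (p j) (p₀ j)^2) ≤ Real.sqrt (∑ _j : Fin d, R₀^2) := by
            apply Real.sqrt_le_sqrt
            apply Finset.sum_le_sum
            intro j _
            exact pow_le_pow_left₀ dist_nonneg (h1 j) 2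
        _ = Real.sqrt d * R₀ := by
            rw [Finset.sum_const, Finset.card_univ, Fintype.card_fin, nsmul_eq_mul,
              Real.sqrt_mul (by positivity), Real.sqrt_sq hR0.le]
    set S := {ι : Fin d → Fin m | (gridCube d (a i) R₀ m ι ∩ E).Nonempty} with hSdef
    have hmap : ∀ ι ∈ S, ∃ U ∈ 𝒰, (gridCube d (a i) R₀ m ι ∩ U).Nonempty := by
      rintro ι ⟨p, hpg, hpE⟩
      obtain ⟨U, hU, hpU⟩ := hcover ⟨hball ι p hpg, hpE⟩
      exact ⟨U, hU, p, hpg, hpU⟩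
    choose! f hf1 hf2 using hmap
    have hScard : S.ncard ≤ 5 ^ d * 𝒰.card := by
      rw [Set.ncard_eq_toFinset_card']
      apply Finset.card_le_mul_card_image_of_maps_to (f := f)
      · intro ι hι; exact hf1 ι (Set.mem_toFinset.mp hι)
      · intro U hU
        have hsub : (S.toFinset.filter fun ι => f ι = U) ⊆
            {ι : Fin d → Fin m | (gridCube d (a i) R₀ m ι ∩ U).Nonempty}.toFinset := by
          intro ι hι
          rw [Finset.mem_filter] at hι
          obtain ⟨hιS, hfι⟩ := hι
          rw [Set.mem_toFinset]
          have := hf2 ι (Set.mem_toFinset.mp hιS)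
          rwa [hfι] at this
        calc _ ≤ _ := Finset.card_le_card hsub
          _ ≤ 5 ^ d := by
              rw [← Set.ncard_eq_toFinset_card']
              exact fiber_ncard_le hR0 hm0 U (hdiam U hU)
    have hcard : A * (m:ℝ)^d ≤ (5:ℝ)^d * 𝒰.card := by
      refine hcnt.trans ?_
      exact_mod_cast Nat.cast_le.mpr hScard
    have hratio : (Real.sqrt d * R₀) / (R₀ / m) = Real.sqrt d * m := by
      field_simp
      ring_nf; exact mul_inv_cancel₀ hR0.ne'
    rw [hratio]
    have hbase1 : (1:ℝ) ≤ Real.sqrt d * m := by nlinarith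
    have step1 : C * (Real.sqrt d * m) ^ s ≤ C * (Real.sqrt d * m) ^ t :=
      mul_le_mul_of_nonneg_left
        (Real.rpow_le_rpow_of_exponent_le hbase1 (le_max_left _ _)) hC.le
    have step2 : (Real.sqrt d * (m:ℝ)) ^ t = (Real.sqrt d) ^ t * (m:ℝ) ^ t :=
      Real.mul_rpow (by positivity) (by positivity)
    have h5 : (0:ℝ) < 5 ^ d := by positivity
    have hmd : (m:ℝ) ^ (d:ℕ) = (m:ℝ) ^ ((d:ℝ) - t) * (m:ℝ) ^ t := by
      rw [← Real.rpow_add hmR, sub_add_cancel, Real.rpow_natCast]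
    have hKlt : (5:ℝ)^d * C * (Real.sqrt d) ^ t < A * (m:ℝ) ^ ((d:ℝ) - t) := by
      rw [hKdef, div_lt_iff₀ hA] at hiK
      linarith
    have hmt : (0:ℝ) < (m:ℝ) ^ t := by positivity
    have hmain : (5:ℝ)^d * (C * ((Real.sqrt d) ^ t * (m:ℝ) ^ t)) < A * (m:ℝ) ^ (d:ℕ) := by
      rw [hmd]
      have h' := mul_lt_mul_of_pos_right hKlt hmt
      calc (5:ℝ)^d * (C * ((Real.sqrt d) ^ t * (m:ℝ) ^ t))
          = ((5:ℝ)^d * C * (Real.sqrt d) ^ t) * (m:ℝ) ^ t := by ring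
        _ < (A * (m:ℝ) ^ ((d:ℝ) - t)) * (m:ℝ) ^ t := h'
        _ = A * ((m:ℝ) ^ ((d:ℝ) - t) * (m:ℝ) ^ t) := by ring
    have hfin : C * ((Real.sqrt d) ^ t * (m:ℝ) ^ t) < (𝒰.card : ℝ) := by
      have h'' : (5:ℝ)^d * (C * ((Real.sqrt d) ^ t * (m:ℝ) ^ t)) < (5:ℝ)^d * (𝒰.card : ℝ) :=
        lt_of_lt_of_le hmain hcard
      exact (mul_lt_mul_iff_right₀ h5).mp h''
    calc C * (Real.sqrt d * m) ^ s ≤ C * (Real.sqrt d * m) ^ t := step1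
      _ = C * ((Real.sqrt d) ^ t * (m:ℝ) ^ t) := by rw [step2]
      _ < _ := hfin
end

section
/- Let W = (W(t))_{t ≥ 0} be a standard Wiener process and let f : [0,1] → ℝ be continuously differentiable with f(t) ≥ 1 for all t ∈ [0,1]. Define the process B_f(t) = f(t)·W(t) − ∫₀ᵗ W(x)·f'(x) dx for t ∈ [0,1] (this equals the Itô stochastic integral ∫₀ᵗ f(x) W(dx) by integration by parts), and let G = {(t, B_f(t)) : t ∈ [0,1]} ⊆ ℝ² be its graph. Then almost surely the Assouad dimension of G equals 2; equivalently, almost surely, for every s < 2 and every C > 0 there exist x ∈ G and 0 < r ≤ R such that the smallest number of sets of diameter at most r needed to cover B(x,R) ∩ G exceeds C·(R/r)^s. -/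
open MeasureTheory ProbabilityTheory Metric Set Filter

/-- `W` is a standard Wiener process (Brownian motion) under `P`: `W 0 = 0` a.s.,
independent increments, `W (t+h) - W t` is normal with mean `0` and variance `h`,
and almost all sample paths are continuous. -/
def IsWienerProcess {Ω : Type*} [MeasurableSpace Ω] (P : Measure Ω) (W : ℝ → Ω → ℝ) : Prop :=
  (∀ᵐ ω ∂P, W 0 ω = 0) ∧
  (∀ (k : ℕ) (t : Fin (k + 1) → ℝ), 0 ≤ t 0 → StrictMono t →
    iIndepFun
      (fun j : Fin k => fun ω => W (t j.succ) ω - W (t j.castSucc) ω) P) ∧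
  (∀ t h : ℝ, 0 ≤ t → 0 ≤ h →
    Measure.map (fun ω => W (t + h) ω - W t ω) P = gaussianReal 0 h.toNNReal) ∧
  (∀ᵐ ω ∂P, Continuous fun t => W t ω)

/-- a family of (r-)separated points in `E` forces every admissible cover to be large -/
lemma sep_cover {X : Type*} [PseudoMetricSpace X] {ι : Type*} [Fintype ι]
    (p : ι → X) (E : Set X) (r : ℝ) (hr : 0 ≤ r)
    (hmem : ∀ q, p q ∈ E) (hsep : ∀ q q', q ≠ q' → r < dist (p q) (p q'))
    (𝒰 : Finset (Set X)) (hdiam : ∀ U ∈ 𝒰, EMetric.diam U ≤ ENNReal.ofReal r)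
    (hcov : E ⊆ ⋃₀ (𝒰 : Set (Set X))) : Fintype.card ι ≤ 𝒰.card := by
  have hchoice : ∀ q, ∃ U, U ∈ 𝒰 ∧ p q ∈ U := by
    intro q
    obtain ⟨U, hU, hpU⟩ := hcov (hmem q)
    exact ⟨U, hU, hpU⟩
  choose U hU hpU using hchoice
  have hinj : Function.Injective (fun q => (⟨U q, hU q⟩ : {V // V ∈ 𝒰})) := by
    intro q q' h
    by_contra hne
    have hlt := hsep q q' hne
    have hUeq : U q = U q' := congrArg Subtype.val h
    have h2 : p q' ∈ U q := hUeq ▸ hpU q'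
    have hd := EMetric.edist_le_diam_of_mem (hpU q) h2
    have hd2 : edist (p q) (p q') ≤ ENNReal.ofReal r := le_trans hd (hdiam _ (hU q))
    rw [edist_dist, ENNReal.ofReal_le_ofReal_iff hr] at hd2
    linarith
  calc Fintype.card ι ≤ Fintype.card {V // V ∈ 𝒰} := Fintype.card_le_of_injective _ hinj
    _ = 𝒰.card := Fintype.card_coe 𝒰

/-- choice of the number of columns -/
lemma exists_K (s C : ℝ) (hs : s < 2) (hC : 0 < C) :
    ∃ K : ℕ, 1 ≤ K ∧ C * (25 * (K:ℝ)) ^ s < (K:ℝ)^2 := by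
  set s' : ℝ := max s 1 with hs'def
  have hs'1 : 1 ≤ s' := le_max_right _ _
  have hs'2 : s' < 2 := by
    apply max_lt hs; norm_num
  set β : ℝ := 2 - s' with hβdef
  have hβ : 0 < β := by simp [hβdef]; linarith
  set A : ℝ := (625*C + 1) ^ β⁻¹ with hA
  obtain ⟨K, hKA⟩ := exists_nat_ge (max A 2)
  have hK2 : (2:ℝ) ≤ K := le_trans (le_max_right _ _) hKA
  have hKA' : A ≤ K := le_trans (le_max_left _ _) hKA
  have hK0 : (0:ℝ) < K := by linarith
  have hK1 : (1:ℝ) ≤ K := by linarith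
  have hK1n : 1 ≤ K := by exact_mod_cast hK1
  refine ⟨K, hK1n, ?_⟩
  have h25K : (1:ℝ) ≤ 25 * K := by nlinarith
  -- step 1 : (25K)^s ≤ (25K)^{s'}
  have h1 : (25 * (K:ℝ)) ^ s ≤ (25 * (K:ℝ)) ^ s' :=
    Real.rpow_le_rpow_of_exponent_le h25K (le_max_left _ _)
  -- step 2 : (25K)^{s'} = 25^{s'} K^{s'} ≤ 625 * K^{s'}
  have h2 : (25 * (K:ℝ)) ^ s' = (25:ℝ)^s' * (K:ℝ)^s' :=
    Real.mul_rpow (by norm_num) (le_of_lt hK0)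
  have h3 : (25:ℝ)^s' ≤ 625 := by
    have : (25:ℝ)^s' ≤ (25:ℝ)^(2:ℝ) :=
      Real.rpow_le_rpow_of_exponent_le (by norm_num) (le_of_lt hs'2)
    have h4 : (25:ℝ)^(2:ℝ) = 625 := by
      rw [show (2:ℝ) = ((2:ℕ):ℝ) by norm_num, Real.rpow_natCast]; norm_num
    linarith
  -- step 3 : 625 C < K^β
  have h5 : 625*C + 1 ≤ (K:ℝ)^β := by
    calc 625*C + 1 = (A)^β := (Real.rpow_inv_rpow (by positivity) (ne_of_gt hβ)).symm
      _ ≤ (K:ℝ)^β := Real.rpow_le_rpow (by positivity) hKA' (le_of_lt hβ)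
  -- combine
  have hKs' : (0:ℝ) < (K:ℝ)^s' := Real.rpow_pos_of_pos hK0 _
  have h6 : (K:ℝ)^2 = (K:ℝ)^s' * (K:ℝ)^β := by
    rw [← Real.rpow_add hK0, hβdef]
    rw [show s' + (2 - s') = (2:ℝ) by ring]
    rw [show (2:ℝ) = ((2:ℕ):ℝ) by norm_num, Real.rpow_natCast]
  calc C * (25 * (K:ℝ)) ^ s ≤ C * ((25:ℝ)^s' * (K:ℝ)^s') := by
        rw [← h2]; exact mul_le_mul_of_nonneg_left (le_trans h1 (le_of_eq rfl)) (le_of_lt hC)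
    _ ≤ C * (625 * (K:ℝ)^s') := by
        apply mul_le_mul_of_nonneg_left _ (le_of_lt hC)
        exact mul_le_mul_of_nonneg_right h3 (le_of_lt hKs')
    _ = (625*C) * (K:ℝ)^s' := by ring
    _ < ((K:ℝ)^β) * (K:ℝ)^s' := by
        apply mul_lt_mul_of_pos_right _ hKs'
        linarith
    _ = (K:ℝ)^2 := by rw [h6]; ring


/-- lower bound for the gaussian measure of a short interval -/
lemma gauss_interval (τ : ℝ) (hτ : 0 < τ) (d c : ℝ) (hc : 0 ≤ c)
    (hd : |d| + Real.sqrt τ ≤ c * Real.sqrt τ) :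
    ENNReal.ofReal (Real.exp (-(c^2)/2) / Real.sqrt (2*Real.pi)) ≤
      gaussianReal 0 τ.toNNReal (Icc d (d + Real.sqrt τ)) := by
  have hτ' : τ.toNNReal ≠ 0 := by
    simp [Real.toNNReal_eq_zero]; linarith
  have hcoe : ((τ.toNNReal : ℝ)) = τ := Real.coe_toNNReal _ (le_of_lt hτ)
  set v := Real.sqrt τ with hv
  have hv0 : 0 < v := Real.sqrt_pos.mpr hτ
  rw [gaussianReal_apply 0 hτ']
  set lo : ℝ := (Real.sqrt (2*Real.pi*τ))⁻¹ * Real.exp (-(c^2)/2) with hlo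
  have hlo0 : 0 ≤ lo := by positivity
  have hbound : ∀ x ∈ Icc d (d + v), ENNReal.ofReal lo ≤ gaussianPDF 0 τ.toNNReal x := by
    intro x hx
    rw [gaussianPDF_def]
    apply ENNReal.ofReal_le_ofReal
    rw [gaussianPDFReal_def]
    simp only [hcoe, sub_zero]
    apply mul_le_mul_of_nonneg_left _ (by positivity)
    -- need exp(-(c^2)/2) ≤ exp (-(x^2)/(2τ))
    apply Real.exp_le_exp.mpr
    rw [div_le_div_iff₀ (by norm_num) (by linarith)]
    -- -(c^2) * (2τ) ≤ -(x^2) * 2  ↔ x^2 * 2 ≤ c^2 * 2 * τ... careful signs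
    have hxabs : |x| ≤ c * v := by
      rw [abs_le]
      constructor
      · have := hx.1
        have h2 : -(c*v) ≤ d := by
          have : |d| ≤ c*v - v := by linarith
          have := (abs_le.mp this).1
          linarith
        linarith
      · have := hx.2
        have h2 : d + v ≤ c * v := by
          have : |d| ≤ c*v - v := by linarith
          have := (abs_le.mp this).2
          linarith
        linarith
    have hx2 : x^2 ≤ c^2 * τ := by
      have h3 : x^2 ≤ (c*v)^2 := by
        rw [← sq_abs x]
        exact pow_le_pow_left₀ (abs_nonneg x) hxabs 2
      have h4 : (c*v)^2 = c^2 * τ := by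
        rw [mul_pow, hv, Real.sq_sqrt (le_of_lt hτ)]
      linarith
    nlinarith
  calc ENNReal.ofReal (Real.exp (-(c^2)/2) / Real.sqrt (2*Real.pi))
      = ENNReal.ofReal lo * ENNReal.ofReal v := by
        rw [← ENNReal.ofReal_mul hlo0]
        congr 1
        rw [hlo]
        rw [show 2*Real.pi*τ = (2*Real.pi)*τ by ring, Real.sqrt_mul (by positivity)]
        rw [hv]
        field_simp
        ring_nf
        rw [← Real.sqrt_mul (by norm_num : (0:ℝ) ≤ 2), ← Real.sqrt_mul (by positivity : (0:ℝ) ≤ 2 * Real.pi)]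
        ring_nf
    _ = ENNReal.ofReal lo * volume (Icc d (d+v)) := by
        rw [Real.volume_Icc]
        congr 1
        rw [show d + v - d = v by ring]
    _ = ∫⁻ _ in Icc d (d+v), ENNReal.ofReal lo := by rw [setLIntegral_const]
    _ ≤ ∫⁻ x in Icc d (d+v), gaussianPDF 0 τ.toNNReal x := by
        apply setLIntegral_mono (measurable_gaussianPDF _ _) hbound

noncomputable def alph (R v : ℝ) : ℕ → ℝ := fun j =>
  if Odd j then -R - j*v else if j = 0 then 0 else 5*R

noncomputable def dstep (R v : ℝ) (j : ℕ) : ℝ := alph R v j - alph R v (j-1)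

noncomputable def gstep (j : ℕ) : ℝ :=
  Real.exp (-(((j:ℝ)+3)^2)/2) / Real.sqrt (2*Real.pi)

noncomputable def pKfun (K : ℕ) : ℝ := ∏ j ∈ Finset.range (2*K), gstep j

lemma gstep_pos (j : ℕ) : 0 < gstep j := by unfold gstep; positivity

lemma gstep_le_one (j : ℕ) : gstep j ≤ 1 := by
  unfold gstep
  rw [div_le_one (by positivity)]
  calc Real.exp (-(((j:ℝ)+3)^2)/2) ≤ 1 := by
        apply Real.exp_le_one_iff.mpr
        nlinarith [sq_nonneg ((j:ℝ)+3)]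
    _ ≤ Real.sqrt (2*Real.pi) := by
        rw [show (1:ℝ) = Real.sqrt 1 by simp]
        apply Real.sqrt_le_sqrt
        nlinarith [Real.pi_gt_three]

lemma pK_pos (K : ℕ) : 0 < pKfun K := Finset.prod_pos (fun j _ => gstep_pos j)

lemma pK_le_one (K : ℕ) : pKfun K ≤ 1 :=
  Finset.prod_le_one (fun j _ => (gstep_pos j).le) (fun j _ => gstep_le_one j)

/-- the step sizes satisfy the bound needed for the gaussian estimate -/
lemma dstep_bound (R v : ℝ) (hR : 0 < R) (hv : 0 < v) (h6 : 6*R ≤ v) (j : ℕ) (hj : 1 ≤ j) :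
    |dstep R v j| + v ≤ ((j:ℝ)+2) * v := by
  have hRv : R ≤ v/6 := by linarith
  unfold dstep alph
  rcases Nat.even_or_odd j with hev | hod
  · -- j even, j ≥ 2, j - 1 odd
    have hj2 : 2 ≤ j := by
      rcases hev with ⟨m, hm⟩
      omega
    have hjne : ¬ (j = 0) := by omega
    have hodd' : Odd (j-1) := by
      rcases hev with ⟨m, hm⟩
      exact ⟨m-1, by omega⟩
    have hnotodd : ¬ Odd j := by simp [Nat.odd_iff, Nat.even_iff.mp hev]
    rw [if_neg hnotodd, if_neg hjne, if_pos hodd']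
    have hcast : ((j-1 : ℕ) : ℝ) = (j:ℝ) - 1 := by
      have : (1:ℕ) ≤ j := hj
      push_cast [Nat.cast_sub this]
      ring
    rw [hcast]
    have hval : 5*R - (-R - ((j:ℝ)-1)*v) = 6*R + ((j:ℝ)-1)*v := by ring
    rw [hval, abs_of_nonneg (by nlinarith [(Nat.one_le_cast.mpr hj : (1:ℝ) ≤ (j:ℝ))])]
    have : (1:ℝ) ≤ (j:ℝ) := Nat.one_le_cast.mpr hj
    nlinarith
  · -- j odd
    have hodd : Odd j := hod
    rw [if_pos hodd]
    rcases eq_or_lt_of_le hj with h1 | h2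
    · -- j = 1
      rw [← h1]
      norm_num
      rw [abs_of_nonpos (by nlinarith)]
      nlinarith
    · -- j ≥ 2 odd hence ≥ 3, j - 1 even ≥ 2
      have hj3 : 3 ≤ j := by
        rcases hodd with ⟨m, hm⟩
        omega
      have hnotodd' : ¬ Odd (j-1) := by
        rcases hodd with ⟨m, hm⟩
        simp [Nat.odd_iff]
        omega
      have hjne' : ¬ (j - 1 = 0) := by omega
      rw [if_neg hnotodd', if_neg hjne']
      have : (1:ℝ) ≤ (j:ℝ) := Nat.one_le_cast.mpr hj
      rw [show -R - (j:ℝ)*v - 5*R = -(6*R + (j:ℝ)*v) by ring, abs_neg,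
        abs_of_nonneg (by nlinarith)]
      nlinarith


lemma fcont (f f' : ℝ → ℝ)
    (hderiv : ∀ x ∈ Icc (0 : ℝ) 1, HasDerivWithinAt f (f' x) (Icc (0 : ℝ) 1) x) :
    ContinuousOn f (Icc (0:ℝ) 1) :=
  fun x hx => (hderiv x hx).continuousWithinAt

lemma ftc_f (f f' : ℝ → ℝ)
    (hderiv : ∀ x ∈ Icc (0 : ℝ) 1, HasDerivWithinAt f (f' x) (Icc (0 : ℝ) 1) x)
    (hf'cont : ContinuousOn f' (Icc (0 : ℝ) 1))
    {a t : ℝ} (ha : a ∈ Icc (0:ℝ) 1) (ht : t ∈ Icc (0:ℝ) 1) (hat : a ≤ t) :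
    ∫ x in a..t, f' x = f t - f a := by
  apply intervalIntegral.integral_eq_sub_of_hasDeriv_right_of_le hat
  · exact (fcont f f' hderiv).mono (Icc_subset_Icc ha.1 ht.2)
  · intro x hx
    have hx' : x ∈ Icc (0:ℝ) 1 := ⟨le_trans ha.1 hx.1.le, le_trans hx.2.le ht.2⟩
    have hmem : Icc (0:ℝ) 1 ∈ nhdsWithin x (Ioi x) := by
      apply mem_nhdsWithin.mpr
      refine ⟨Iio 1, isOpen_Iio, lt_of_lt_of_le hx.2 ht.2, ?_⟩
      intro y hy
      exact ⟨le_trans hx'.1 (le_of_lt hy.2), le_of_lt hy.1⟩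
    exact (hderiv x hx').mono_of_mem_nhdsWithin hmem
  · apply ContinuousOn.intervalIntegrable
    apply hf'cont.mono
    rw [uIcc_of_le hat]
    exact Icc_subset_Icc ha.1 ht.2

/-- increment formula for B along a continuous path -/
lemma B_increment (f f' : ℝ → ℝ)
    (hderiv : ∀ x ∈ Icc (0 : ℝ) 1, HasDerivWithinAt f (f' x) (Icc (0 : ℝ) 1) x)
    (hf'cont : ContinuousOn f' (Icc (0 : ℝ) 1))
    (g : ℝ → ℝ) (hg : Continuous g)
    {a t : ℝ} (ha : a ∈ Icc (0:ℝ) 1) (ht : t ∈ Icc (0:ℝ) 1) (hat : a ≤ t) :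
    (f t * g t - ∫ x in (0:ℝ)..t, g x * f' x) - (f a * g a - ∫ x in (0:ℝ)..a, g x * f' x)
      = f t * (g t - g a) - ∫ x in a..t, (g x - g a) * f' x := by
  have hint : ∀ u ∈ Icc (0:ℝ) 1, ∀ v ∈ Icc (0:ℝ) 1,
      IntervalIntegrable (fun x => g x * f' x) volume u v := by
    intro u hu v hv
    apply ContinuousOn.intervalIntegrable
    apply ContinuousOn.mono (s := Icc (0:ℝ) 1)
    · exact (hg.continuousOn).mul hf'cont
    · exact uIcc_subset_Icc hu hv
  have h0 : (0:ℝ) ∈ Icc (0:ℝ) 1 := by norm_num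
  have hsub : (∫ x in (0:ℝ)..t, g x * f' x) - (∫ x in (0:ℝ)..a, g x * f' x)
      = ∫ x in a..t, g x * f' x :=
    intervalIntegral.integral_interval_sub_left (hint 0 h0 t ht) (hint 0 h0 a ha)
  have hsplit : ∫ x in a..t, g x * f' x
      = (∫ x in a..t, (g x - g a) * f' x) + g a * (f t - f a) := by
    have h2 : IntervalIntegrable (fun x => (g x - g a) * f' x) volume a t := by
      apply ContinuousOn.intervalIntegrable
      apply ContinuousOn.mono (s := Icc (0:ℝ) 1)
      · exact ((hg.continuousOn).sub continuousOn_const).mul hf'cont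
      · exact uIcc_subset_Icc ha ht
    have h3 : IntervalIntegrable (fun x => g a * f' x) volume a t := by
      apply ContinuousOn.intervalIntegrable
      apply ContinuousOn.mono (s := Icc (0:ℝ) 1)
      · exact continuousOn_const.mul hf'cont
      · exact uIcc_subset_Icc ha ht
    calc ∫ x in a..t, g x * f' x
        = ∫ x in a..t, ((g x - g a) * f' x + g a * f' x) := by
          apply intervalIntegral.integral_congr; intro x _; ring
      _ = (∫ x in a..t, (g x - g a) * f' x) + ∫ x in a..t, g a * f' x :=
          intervalIntegral.integral_add h2 h3
      _ = (∫ x in a..t, (g x - g a) * f' x) + g a * (f t - f a) := by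
          rw [intervalIntegral.integral_const_mul,
            ftc_f f f' hderiv hf'cont ha ht hat]
  have hkey : (∫ x in (0:ℝ)..t, g x * f' x) = (∫ x in (0:ℝ)..a, g x * f' x)
      + ((∫ x in a..t, (g x - g a) * f' x) + g a * (f t - f a)) := by
    rw [← hsplit]; linarith [hsub]
  rw [hkey]; ring

/-- continuity of the path B -/
lemma B_cont (f f' : ℝ → ℝ)
    (hderiv : ∀ x ∈ Icc (0 : ℝ) 1, HasDerivWithinAt f (f' x) (Icc (0 : ℝ) 1) x)
    (hf'cont : ContinuousOn f' (Icc (0 : ℝ) 1))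
    (g : ℝ → ℝ) (hg : Continuous g) :
    ContinuousOn (fun t => f t * g t - ∫ x in (0:ℝ)..t, g x * f' x) (Icc (0:ℝ) 1) := by
  apply ContinuousOn.sub
  · exact (fcont f f' hderiv).mul hg.continuousOn
  · have hInt : IntegrableOn (fun x => g x * f' x) (Icc (0:ℝ) 1) volume := by
      apply ContinuousOn.integrableOn_compact isCompact_Icc
      exact (hg.continuousOn).mul hf'cont
    have hc := intervalIntegral.continuousOn_primitive (a := 0) (b := 1)
        (f := fun x => g x * f' x) hInt
    apply ContinuousOn.congr hc
    intro t ht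
    exact intervalIntegral.integral_of_le ht.1

noncomputable def ept (a b : ℝ) : EuclideanSpace ℝ (Fin 2) :=
  (WithLp.equiv 2 (Fin 2 → ℝ)).symm ![a, b]

lemma ept_zero (a b : ℝ) : (ept a b) 0 = a := by simp [ept]
lemma ept_one (a b : ℝ) : (ept a b) 1 = b := by simp [ept]
lemma ept_dist (a b c d : ℝ) :
    dist (ept a b) (ept c d) = Real.sqrt ((a-c)^2 + (b-d)^2) := by
  rw [EuclideanSpace.dist_eq]
  congr 1
  rw [Fin.sum_univ_two]
  simp [ept, Real.dist_eq, sq_abs]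

lemma coord_le_dist (x y : EuclideanSpace ℝ (Fin 2)) (i : Fin 2) :
    |x i - y i| ≤ dist x y := by
  rw [EuclideanSpace.dist_eq]
  have h1 : |x i - y i| = Real.sqrt ((x i - y i)^2) := by rw [Real.sqrt_sq_eq_abs]
  rw [h1]
  apply Real.sqrt_le_sqrt
  have h2 : (x i - y i)^2 = dist (x i) (y i)^2 := by rw [Real.dist_eq, sq_abs]
  rw [h2]
  exact Finset.single_le_sum (f := fun j => dist (x j) (y j)^2)
    (fun j _ => sq_nonneg _) (Finset.mem_univ i)

set_option maxHeartbeats 2000000 in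
/-- The deterministic window lemma: an oscillation pattern of the driving path g produces
K·K well-separated points on the graph of β inside a small ball. -/
lemma window_lemma
    (f f' : ℝ → ℝ)
    (hderiv : ∀ x ∈ Icc (0 : ℝ) 1, HasDerivWithinAt f (f' x) (Icc (0 : ℝ) 1) x)
    (hf'cont : ContinuousOn f' (Icc (0 : ℝ) 1))
    (hf1 : ∀ x ∈ Icc (0 : ℝ) 1, 1 ≤ f x)
    (M' : ℝ) (hM'0 : 0 ≤ M') (hM' : ∀ x ∈ Icc (0:ℝ) 1, |f' x| ≤ M')
    (g : ℝ → ℝ) (hg : Continuous g)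
    (β : ℝ → ℝ) (hβ : ∀ t ∈ Icc (0:ℝ) 1, β t = f t * g t - ∫ x in (0:ℝ)..t, g x * f' x)
    (K : ℕ) (hK : 1 ≤ K) (τ : ℝ) (hτ : 0 < τ)
    (a : ℝ) (ha0 : 0 ≤ a) (hfit : a + 2*K*τ ≤ 1)
    (hosc : ∀ u ∈ Icc a (a + 2*K*τ), |g u - g a| ≤ 1/(M'+1))
    (R : ℝ) (hR : R = 4*K*τ)
    (hdown : ∀ j : ℕ, j < K → g (a + (2*(j:ℝ)+1)*τ) - g a ≤ -R)
    (hup : ∀ j : ℕ, j < K → g (a + (2*(j:ℝ)+2)*τ) - g a ≥ 5*R) :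
    ∃ pts : Fin K × Fin K → EuclideanSpace ℝ (Fin 2),
      (∀ q, (pts q) 0 ∈ Icc (0:ℝ) 1 ∧ (pts q) 1 = β ((pts q) 0) ∧
        pts q ∈ closedBall (ept a (β a)) (5*R)) ∧
      (∀ q q', q ≠ q' → R/(5*K) < dist (pts q) (pts q')) := by
  have hK0 : (0:ℝ) < K := by exact_mod_cast hK
  have hR0 : 0 < R := by rw [hR]; positivity
  set T : ℝ := 2*K*τ with hT
  have hT0 : 0 < T := by positivity
  have hTR : T = R/2 := by rw [hT, hR]; ring
  have hsub : Icc a (a+T) ⊆ Icc (0:ℝ) 1 := fun u hu => ⟨le_trans ha0 hu.1, le_trans hu.2 hfit⟩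
  -- continuity of β on [0,1]
  have hβc : ContinuousOn β (Icc (0:ℝ) 1) := by
    apply ContinuousOn.congr (B_cont f f' hderiv hf'cont g hg)
    intro t ht; exact hβ t ht
  -- error bound
  have herr : ∀ t ∈ Icc a (a+T), |∫ x in a..t, (g x - g a) * f' x| ≤ R/2 := by
    intro t ht
    have hbd : ∀ x ∈ Set.uIoc a t, ‖(g x - g a) * f' x‖ ≤ M'/(M'+1) := by
      intro x hx
      have hx' : x ∈ Icc a (a+T) := by
        rcases hx with ⟨h1, h2⟩
        constructor
        · calc a ≤ min a t := le_min le_rfl ?_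
            _ ≤ x := le_of_lt h1
          exact ht.1
        · calc x ≤ max a t := h2
            _ ≤ a + T := max_le (by linarith) ht.2
      rw [norm_mul, Real.norm_eq_abs, Real.norm_eq_abs]
      calc |g x - g a| * |f' x| ≤ (1/(M'+1)) * M' := by
            apply mul_le_mul (hosc x hx') (hM' x (hsub hx')) (abs_nonneg _) (by positivity)
        _ = M'/(M'+1) := by ring
    have := intervalIntegral.norm_integral_le_of_norm_le_const hbd
    rw [Real.norm_eq_abs] at this
    calc |∫ x in a..t, (g x - g a) * f' x| ≤ M'/(M'+1) * |t - a| := this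
      _ ≤ 1 * T := by
          apply mul_le_mul
          · rw [div_le_one (by linarith)]; linarith
          · rw [abs_of_nonneg (by linarith [ht.1])]; linarith [ht.2]
          · exact abs_nonneg _
          · norm_num
      _ = R/2 := by rw [one_mul, hTR]
  -- increment formula
  have hinc : ∀ t ∈ Icc a (a+T),
      β t - β a = f t * (g t - g a) - ∫ x in a..t, (g x - g a) * f' x := by
    intro t ht
    have ha' : a ∈ Icc (0:ℝ) 1 := hsub ⟨le_rfl, by linarith⟩
    have ht' : t ∈ Icc (0:ℝ) 1 := hsub ht
    rw [hβ t ht', hβ a ha']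
    exact B_increment f f' hderiv hf'cont g hg ha' ht' ht.1
  -- column endpoints
  set u : ℕ → ℝ := fun j => a + (2*(j:ℝ)+1)*τ with hu
  set v : ℕ → ℝ := fun j => a + (2*(j:ℝ)+2)*τ with hv
  have humem : ∀ j : ℕ, j < K → u j ∈ Icc a (a+T) := by
    intro j hj
    have : (j:ℝ) ≤ (K:ℝ) - 1 := by
      have : (j:ℝ) + 1 ≤ K := by exact_mod_cast hj
      linarith
    constructor
    · simp only [hu]; nlinarith
    · simp only [hu, hT]; nlinarith
  have hvmem : ∀ j : ℕ, j < K → v j ∈ Icc a (a+T) := by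
    intro j hj
    have : (j:ℝ) ≤ (K:ℝ) - 1 := by
      have : (j:ℝ) + 1 ≤ K := by exact_mod_cast hj
      linarith
    constructor
    · simp only [hv]; nlinarith
    · simp only [hv, hT]; nlinarith
  -- β bounds at column endpoints
  have hβu : ∀ j : ℕ, j < K → β (u j) ≤ β a := by
    intro j hj
    have h1 := hinc (u j) (humem j hj)
    have h2 := herr (u j) (humem j hj)
    have hS := hdown j hj
    have hfu : 1 ≤ f (u j) := hf1 _ (hsub (humem j hj))
    have hS' : g (u j) - g a ≤ -R := hS
    have hfS : f (u j) * (g (u j) - g a) ≤ g (u j) - g a := by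
      have hgle : g (u j) - g a ≤ 0 := by linarith
      nlinarith
    have habs := (abs_le.mp h2).1
    linarith
  have hβv : ∀ j : ℕ, j < K → β a + 4*R ≤ β (v j) := by
    intro j hj
    have h1 := hinc (v j) (hvmem j hj)
    have h2 := herr (v j) (hvmem j hj)
    have hS := hup j hj
    have hfv : 1 ≤ f (v j) := hf1 _ (hsub (hvmem j hj))
    have hS' : g (v j) - g a ≥ 5*R := hS
    have hfS : g (v j) - g a ≤ f (v j) * (g (v j) - g a) := by
      have hgge : 0 ≤ g (v j) - g a := by nlinarith
      nlinarith
    have habs := (abs_le.mp h2).2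
    linarith
  -- heights
  have hIVT : ∀ (j : Fin K) (i : Fin K), ∃ t, t ∈ Icc (u (j:ℕ)) (v (j:ℕ)) ∧
      β t = β a + 4*R*((i:ℕ):ℝ)/K := by
    intro j i
    have huv : u (j:ℕ) ≤ v (j:ℕ) := by
      have : (0:ℝ) ≤ τ := le_of_lt hτ
      simp only [hu, hv]
      nlinarith
    have hcont' : ContinuousOn β (Icc (u (j:ℕ)) (v (j:ℕ))) := by
      apply hβc.mono
      intro z hz
      apply hsub
      exact ⟨le_trans (humem j j.2).1 hz.1, le_trans hz.2 (hvmem j j.2).2⟩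
    have himg := intermediate_value_Icc huv hcont'
    have hmem : β a + 4*R*((i:ℕ):ℝ)/K ∈ Icc (β (u (j:ℕ))) (β (v (j:ℕ))) := by
      constructor
      · have hbu := hβu j j.2
        have h0 : (0:ℝ) ≤ 4*R*((i:ℕ):ℝ)/K := by positivity
        linarith
      · have hbv := hβv j j.2
        have hiK : ((i:ℕ):ℝ) ≤ (K:ℝ) := by exact_mod_cast (le_of_lt i.2)
        have : 4*R*((i:ℕ):ℝ)/K ≤ 4*R := by
          rw [div_le_iff₀ hK0]
          nlinarith
        linarith
    obtain ⟨t, htmm, hte⟩ := himg hmem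
    exact ⟨t, htmm, hte⟩
  choose tt htm hte using hIVT
  refine ⟨fun q => ept (tt q.1 q.2) (β a + 4*R*((q.2:ℕ):ℝ)/K), ?_, ?_⟩
  · rintro ⟨j, i⟩
    dsimp only
    have htmem : tt j i ∈ Icc (u (j:ℕ)) (v (j:ℕ)) := htm j i
    have htIcc : tt j i ∈ Icc a (a+T) :=
      ⟨le_trans (humem j j.2).1 htmem.1, le_trans htmem.2 (hvmem j j.2).2⟩
    refine ⟨?_, ?_, ?_⟩
    · rw [ept_zero]; exact hsub htIcc
    · rw [ept_zero, ept_one]; exact (hte j i).symm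
    · rw [mem_closedBall, ept_dist]
      have h1 : (tt j i - a)^2 ≤ (R/2)^2 := by
        have h1a : 0 ≤ tt j i - a := by linarith [htIcc.1]
        have h1b : tt j i - a ≤ R/2 := by rw [← hTR]; linarith [htIcc.2]
        nlinarith
      have h2 : (β a + 4*R*((i:ℕ):ℝ)/K - β a)^2 ≤ (4*R)^2 := by
        have h2a : 0 ≤ 4*R*((i:ℕ):ℝ)/K := by positivity
        have hiK : ((i:ℕ):ℝ) ≤ (K:ℝ) := by exact_mod_cast (le_of_lt i.2)
        have h2b : 4*R*((i:ℕ):ℝ)/K ≤ 4*R := by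
          rw [div_le_iff₀ hK0]; nlinarith
        nlinarith
      calc Real.sqrt ((tt j i - a)^2 + (β a + 4*R*((i:ℕ):ℝ)/K - β a)^2)
          ≤ Real.sqrt ((5*R)^2) := by
            apply Real.sqrt_le_sqrt; nlinarith
        _ = 5*R := by rw [Real.sqrt_sq (by linarith)]
  · -- separation
    have hsep_horiz : ∀ (j j' : Fin K) (i i' : Fin K), (j:ℕ) < (j':ℕ) →
        R/(5*K) < dist (ept (tt j i) (β a + 4*R*((i:ℕ):ℝ)/K))
          (ept (tt j' i') (β a + 4*R*((i':ℕ):ℝ)/K)) := by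
      intro j j' i i' hjj
      have h1 : tt j i ≤ a + (2*((j:ℕ):ℝ)+2)*τ := (htm j i).2
      have h2 : a + (2*((j':ℕ):ℝ)+1)*τ ≤ tt j' i' := (htm j' i').1
      have hgap : tt j i + τ ≤ tt j' i' := by
        have hcast : ((j:ℕ):ℝ) + 1 ≤ ((j':ℕ):ℝ) := by exact_mod_cast hjj
        nlinarith
      have hcd := coord_le_dist (ept (tt j i) (β a + 4*R*((i:ℕ):ℝ)/K))
        (ept (tt j' i') (β a + 4*R*((i':ℕ):ℝ)/K)) 0
      rw [ept_zero, ept_zero] at hcd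
      have habs : τ ≤ |tt j i - tt j' i'| := by
        rw [abs_sub_comm, abs_of_nonneg (by linarith)]
        linarith
      have hτgt : R/(5*K) < τ := by
        rw [hR, div_lt_iff₀ (by positivity)]
        nlinarith
      linarith
    rintro ⟨j, i⟩ ⟨j', i'⟩ hne
    dsimp only
    rcases Nat.lt_trichotomy (j:ℕ) (j':ℕ) with hlt | heq | hgt'
    · exact hsep_horiz j j' i i' hlt
    · -- same column, different heights
      have hjeq : j = j' := Fin.ext heq
      have hine : (i:ℕ) ≠ (i':ℕ) := by
        intro hc
        exact hne (by rw [hjeq, Fin.ext hc])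
      have hcd := coord_le_dist (ept (tt j i) (β a + 4*R*((i:ℕ):ℝ)/K))
        (ept (tt j' i') (β a + 4*R*((i':ℕ):ℝ)/K)) 1
      rw [ept_one, ept_one] at hcd
      have hdiff : 4*R/K ≤ |(β a + 4*R*((i:ℕ):ℝ)/K) - (β a + 4*R*((i':ℕ):ℝ)/K)| := by
        rw [show β a + 4*R*((i:ℕ):ℝ)/K - (β a + 4*R*((i':ℕ):ℝ)/K)
            = 4*R*(((i:ℕ):ℝ) - ((i':ℕ):ℝ))/K by ring]
        rw [abs_div, abs_of_nonneg (by positivity : (0:ℝ) ≤ (K:ℝ))]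
        rw [div_le_div_iff₀ hK0 hK0]
        have h1 : (1:ℝ) ≤ |((i:ℕ):ℝ) - ((i':ℕ):ℝ)| := by
          rcases Nat.lt_or_ge (i:ℕ) (i':ℕ) with hlt2 | hge
          · have : ((i:ℕ):ℝ) + 1 ≤ ((i':ℕ):ℝ) := by exact_mod_cast hlt2
            rw [abs_sub_comm, abs_of_nonneg (by linarith)]
            linarith
          · have hlt' : (i':ℕ) < (i:ℕ) := lt_of_le_of_ne hge (Ne.symm hine)
            have : ((i':ℕ):ℝ) + 1 ≤ ((i:ℕ):ℝ) := by exact_mod_cast hlt'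
            rw [abs_of_nonneg (by linarith)]
            linarith
        rw [abs_mul, abs_mul]
        rw [abs_of_nonneg (by norm_num : (0:ℝ) ≤ 4), abs_of_nonneg (le_of_lt hR0)]
        nlinarith [mul_le_mul_of_nonneg_left h1 (by positivity : (0:ℝ) ≤ 4*R*(K:ℝ))]
      have hgtK : R/(5*K) < 4*R/K := by
        rw [div_lt_div_iff₀ (by positivity) hK0]
        nlinarith
      linarith
    · rw [dist_comm]
      exact hsep_horiz j' j i' i hgt'

lemma pattern_sums (g : ℝ → ℝ) (K : ℕ) (τ R v : ℝ) (i : ℕ)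
    (hpatt : ∀ j < 2*K, g (((2*K*i+j+1 : ℕ) : ℝ)*τ) - g (((2*K*i+j : ℕ) : ℝ)*τ) ∈
      Icc (dstep R v (j+1)) (dstep R v (j+1) + v)) :
    ∀ jj ≤ 2*K, g (((2*K*i+jj : ℕ) : ℝ)*τ) - g (((2*K*i : ℕ) : ℝ)*τ) ∈
      Icc (alph R v jj) (alph R v jj + (jj:ℝ)*v) := by
  intro jj
  induction jj with
  | zero =>
      intro _
      simp [alph]
  | succ jj ih =>
      intro hjj
      have h1 := ih (by omega)
      have h2 := hpatt jj (by omega)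
      have hstep : alph R v (jj+1) = alph R v jj + dstep R v (jj+1) := by
        unfold dstep
        simp
      have htel : g (((2*K*i+(jj+1) : ℕ) : ℝ)*τ) - g (((2*K*i : ℕ) : ℝ)*τ)
          = (g (((2*K*i+jj : ℕ) : ℝ)*τ) - g (((2*K*i : ℕ) : ℝ)*τ))
            + (g (((2*K*i+jj+1 : ℕ) : ℝ)*τ) - g (((2*K*i+jj : ℕ) : ℝ)*τ)) := by
        have he : (2*K*i+(jj+1) : ℕ) = (2*K*i+jj+1 : ℕ) := by omega
        rw [he]; ring
      rw [htel]
      obtain ⟨h1a, h1b⟩ := h1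
      obtain ⟨h2a, h2b⟩ := h2
      constructor
      · rw [hstep]; linarith
      · have hc : ((jj+1 : ℕ):ℝ) = (jj:ℝ)+1 := by push_cast; ring
        rw [hstep, hc]; linarith
lemma pattern_down_up (g : ℝ → ℝ) (K : ℕ) (hK : 1 ≤ K) (τ R v : ℝ) (i : ℕ)
    (hpatt : ∀ j < 2*K, g (((2*K*i+j+1 : ℕ) : ℝ)*τ) - g (((2*K*i+j : ℕ) : ℝ)*τ) ∈
      Icc (dstep R v (j+1)) (dstep R v (j+1) + v)) :
    (∀ j, j < K → g (((2*K*i+(2*j+1) : ℕ) : ℝ)*τ) - g (((2*K*i : ℕ):ℝ)*τ) ≤ -R) ∧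
    (∀ j, j < K → g (((2*K*i+(2*j+2) : ℕ) : ℝ)*τ) - g (((2*K*i : ℕ):ℝ)*τ) ≥ 5*R) := by
  have hsums := pattern_sums g K τ R v i hpatt
  constructor
  · intro j hj
    have h := hsums (2*j+1) (by omega)
    have hodd : Odd (2*j+1) := ⟨j, by omega⟩
    have halph : alph R v (2*j+1) = -R - ((2*j+1 : ℕ):ℝ)*v := by
      unfold alph; rw [if_pos hodd]
    have h2 := h.2
    rw [halph] at h2
    linarith
  · intro j hj
    have h := hsums (2*j+2) (by omega)
    have hnotodd : ¬ Odd (2*j+2) := by rw [Nat.odd_iff]; omega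
    have halph : alph R v (2*j+2) = 5*R := by
      unfold alph; rw [if_neg hnotodd, if_neg (by omega : ¬ (2*j+2 = 0))]
    have h1 := h.1
    rw [halph] at h1
    linarith


noncomputable def τf (K n : ℕ) : ℝ := (1152*(K:ℝ)^2*(n:ℝ))⁻¹

lemma tau_cond (K n : ℕ) (hK : 1 ≤ K) (hn : 1 ≤ n) :
    0 < τf K n ∧ 6*(4*(K:ℝ)*τf K n) ≤ Real.sqrt (τf K n) ∧ 2*(K:ℝ)*(n:ℝ)*τf K n ≤ 1 := by
  have hK0 : (0:ℝ) < (K:ℝ) := by exact_mod_cast hK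
  have hn0 : (1:ℝ) ≤ (n:ℝ) := by exact_mod_cast hn
  set D : ℝ := 1152*(K:ℝ)^2*(n:ℝ) with hD
  have hD0 : 0 < D := by rw [hD]; nlinarith
  have hτ0 : 0 < τf K n := by unfold τf; rw [← hD]; positivity
  refine ⟨hτ0, ?_, ?_⟩
  · have hsD : 0 < Real.sqrt D := Real.sqrt_pos.mpr hD0
    have h24 : 24*(K:ℝ) ≤ Real.sqrt D := by
      rw [show (24*(K:ℝ)) = Real.sqrt ((24*(K:ℝ))^2) by rw [Real.sqrt_sq (by positivity)]]
      apply Real.sqrt_le_sqrt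
      rw [hD]; nlinarith
    have hkey : Real.sqrt D * D⁻¹ = (Real.sqrt D)⁻¹ := by
      rw [show D = Real.sqrt D * Real.sqrt D from (Real.mul_self_sqrt hD0.le).symm]
      field_simp
      rw [Real.sqrt_sq hsD.le]
    have hτsqrt : Real.sqrt (τf K n) = (Real.sqrt D)⁻¹ := by
      unfold τf; rw [← hD, Real.sqrt_inv]
    rw [hτsqrt]
    calc 6*(4*(K:ℝ)*τf K n) = (24*(K:ℝ)) * D⁻¹ := by unfold τf; rw [← hD]; ring
      _ ≤ Real.sqrt D * D⁻¹ := mul_le_mul_of_nonneg_right h24 (by positivity)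
      _ = (Real.sqrt D)⁻¹ := hkey
  · unfold τf; rw [← hD]
    rw [show 2*(K:ℝ)*(n:ℝ)*D⁻¹ = (2*(K:ℝ)*(n:ℝ))/D by ring]
    rw [div_le_one hD0]
    rw [hD]
    have hK1R : (1:ℝ) ≤ (K:ℝ) := by exact_mod_cast hK
    have h1 : 2*(K:ℝ) ≤ 1152*(K:ℝ)^2 := by nlinarith
    nlinarith [mul_le_mul_of_nonneg_right h1 (by linarith : (0:ℝ) ≤ (n:ℝ))]

lemma prod_block {M : Type*} [CommMonoid M] (m n : ℕ) (F : ℕ → M) :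
    ∏ l ∈ Finset.range (m*n), F l
      = ∏ i ∈ Finset.range n, ∏ j ∈ Finset.range m, F (m*i + j) := by
  induction n with
  | zero => simp
  | succ n ih =>
      rw [Nat.mul_succ, Finset.prod_range_add, ih, Finset.prod_range_succ]

set_option maxHeartbeats 4000000 in
lemma scale_prob {Ω : Type*} [MeasurableSpace Ω] (P : Measure Ω) [IsProbabilityMeasure P]
    (W : ℝ → Ω → ℝ) (hW : IsWienerProcess P W)
    (K n : ℕ) (hK : 1 ≤ K) (hn : 1 ≤ n) (τ : ℝ) (hτ : 0 < τ)
    (h6 : 6*(4*K*τ) ≤ Real.sqrt τ) :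
    P {ω | ¬ ∃ i < n, ∀ j < 2*K,
        W (((2*K*i+j+1 : ℕ) : ℝ)*τ) ω - W (((2*K*i+j : ℕ) : ℝ)*τ) ω ∈
          Icc (dstep (4*K*τ) (Real.sqrt τ) (j+1))
            (dstep (4*K*τ) (Real.sqrt τ) (j+1) + Real.sqrt τ)}
      ≤ ENNReal.ofReal ((1 - pKfun K)^n) := by
  set R : ℝ := 4*K*τ with hRdef
  set v : ℝ := Real.sqrt τ with hvdef
  have hK' : (0:ℝ) < (K:ℝ) := by exact_mod_cast hK
  have hR0 : 0 < R := by rw [hRdef]; exact mul_pos (by nlinarith) hτ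
  have hv0 : 0 < v := Real.sqrt_pos.mpr hτ
  set N : ℕ := 2*K*n with hNdef
  have h2K0 : 0 < 2*K := by omega
  -- the increments
  set Yf : ℕ → Ω → ℝ := fun l ω => W (((l+1 : ℕ) : ℝ)*τ) ω - W (((l : ℕ) : ℝ)*τ) ω with hYdef
  -- independence from the axiom
  have hInd : iIndepFun (fun l : Fin N => Yf (l:ℕ)) P := by
    have h := hW.2.1 N (fun l : Fin (N+1) => ((l:ℕ):ℝ)*τ) (by simp)
      (by
        intro l l' hll
        have : (l:ℕ) < (l':ℕ) := hll
        have hc : ((l:ℕ):ℝ) < ((l':ℕ):ℝ) := by exact_mod_cast this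
        exact mul_lt_mul_of_pos_right hc hτ)
    exact h
  have hIF := (iIndepFun_iff_measure_inter_preimage_eq_mul).mp hInd
  -- marginal laws
  have hlaw : ∀ l : ℕ, Measure.map (Yf l) P = gaussianReal 0 τ.toNNReal := by
    intro l
    have h := hW.2.2.1 (((l : ℕ):ℝ)*τ) τ (by positivity) hτ.le
    have harg : ((l : ℕ):ℝ)*τ + τ = ((l+1 : ℕ):ℝ)*τ := by push_cast; ring
    rw [harg] at h
    exact h
  have haem : ∀ l : ℕ, AEMeasurable (Yf l) P := by
    intro l
    by_contra h
    have h0 := Measure.map_of_not_aemeasurable (f := Yf l) (μ := P) h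
    rw [hlaw l] at h0
    have h1 : (gaussianReal 0 τ.toNNReal) Set.univ = 1 := measure_univ
    rw [h0] at h1
    simp at h1
  set Z : ℕ → Ω → ℝ := fun l => AEMeasurable.mk (Yf l) (haem l) with hZdef
  have hZm : ∀ l, Measurable (Z l) := fun l => (haem l).measurable_mk
  have hZae : ∀ l, Yf l =ᵐ[P] Z l := fun l => (haem l).ae_eq_mk
  have hD : P {ω | ¬ ∀ l, Yf l ω = Z l ω} = 0 := by
    have h1 : ∀ᵐ ω ∂P, ∀ l, Yf l ω = Z l ω := ae_all_iff.mpr (fun l => hZae l)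
    exact h1
  have htrans : ∀ A B : Set Ω, (∀ ω, (∀ l, Yf l ω = Z l ω) → (ω ∈ A ↔ ω ∈ B)) → P A = P B := by
    intro A B hAB
    have hsub1 : ∀ (A B : Set Ω), (∀ ω, (∀ l, Yf l ω = Z l ω) → (ω ∈ A → ω ∈ B)) →
        P A ≤ P B := by
      intro A B hi
      calc P A ≤ P (B ∪ {ω | ¬ ∀ l, Yf l ω = Z l ω}) := by
            apply measure_mono
            intro ω hω
            by_cases hd : ∀ l, Yf l ω = Z l ω
            · exact Or.inl (hi ω hd hω)
            · exact Or.inr hd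
        _ ≤ P B + P {ω | ¬ ∀ l, Yf l ω = Z l ω} := measure_union_le _ _
        _ = P B := by rw [hD, add_zero]
    exact le_antisymm (hsub1 A B (fun ω h hh => (hAB ω h).mp hh))
      (hsub1 B A (fun ω h hh => (hAB ω h).mpr hh))
  -- interval targets
  set J : ℕ → Set ℝ := fun j => Icc (dstep R v (j+1)) (dstep R v (j+1) + v) with hJdef
  have hJm : ∀ j, MeasurableSet (J j) := fun j => measurableSet_Icc
  set marg : ℕ → ENNReal := fun j => gaussianReal 0 τ.toNNReal (J j) with hmargdef
  have hmargY : ∀ l j : ℕ, P (Yf l ⁻¹' (J j)) = marg j := by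
    intro l j
    have h := Measure.map_apply_of_aemeasurable (haem l) (μ := P) (hJm j)
    rw [hlaw l] at h
    exact h.symm
  -- events
  set EY : ℕ → Set Ω := fun i => ⋂ j ∈ Finset.range (2*K), Yf (2*K*i+j) ⁻¹' (J j) with hEYdef
  set EZ : ℕ → Set Ω := fun i => ⋂ j ∈ Finset.range (2*K), Z (2*K*i+j) ⁻¹' (J j) with hEZdef
  have hEZm : ∀ i, MeasurableSet (EZ i) := by
    intro i
    apply MeasurableSet.biInter (Finset.range (2*K)).countable_toSet
    intro j _
    exact (hZm _) (hJm j)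
  have hEZY : ∀ i, P (EZ i) = P (EY i) := by
    intro i
    apply htrans
    intro ω hωD
    simp only [hEZdef, hEYdef, Set.mem_iInter, Set.mem_preimage]
    constructor
    · intro h j hj; rw [hωD]; exact h j hj
    · intro h j hj; rw [← hωD]; exact h j hj
  -- the global product formula
  set q : ENNReal := ∏ j ∈ Finset.range (2*K), marg j with hqdef
  have hprodS : ∀ S : Finset ℕ, (∀ i ∈ S, i < n) → P (⋂ i ∈ S, EY i) = ∏ _i ∈ S, q := by
    intro S hS
    classical
    set c : Fin N → Set ℝ := fun l => if (l:ℕ)/(2*K) ∈ S then J ((l:ℕ)%(2*K)) else univ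
      with hcdef
    have hcm : ∀ l ∈ (Finset.univ : Finset (Fin N)), MeasurableSet (c l) := by
      intro l _
      by_cases h : (l:ℕ)/(2*K) ∈ S
      · simp only [hcdef, if_pos h]; exact hJm _
      · simp only [hcdef, if_neg h]; exact MeasurableSet.univ
    have h1 := hIF Finset.univ (sets := c) hcm
    have hset : (⋂ l ∈ (Finset.univ : Finset (Fin N)), (fun l : Fin N => Yf (l:ℕ)) l ⁻¹' c l)
        = ⋂ i ∈ S, EY i := by
      ext ω
      simp only [Set.mem_iInter, Finset.mem_univ, forall_const, Set.mem_preimage,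
        hEYdef, Finset.mem_range]
      constructor
      · intro h i hiS j hj
        have hin : i < n := hS i hiS
        have hlN : 2*K*i + j < N := by
          calc 2*K*i + j < 2*K*i + 2*K := by omega
            _ = 2*K*(i+1) := by ring
            _ ≤ 2*K*n := Nat.mul_le_mul_left _ (by omega)
        have h2 := h ⟨2*K*i+j, hlN⟩
        have hdiv : (2*K*i+j)/(2*K) = i := by
          rw [Nat.mul_add_div h2K0, Nat.div_eq_of_lt hj, add_zero]
        have hmod : (2*K*i+j)%(2*K) = j := by
          rw [Nat.mul_add_mod]; exact Nat.mod_eq_of_lt hj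
        simp only [hcdef] at h2
        rw [hdiv, hmod, if_pos hiS] at h2
        exact h2
      · intro h l
        simp only [hcdef]
        by_cases hc2 : (l:ℕ)/(2*K) ∈ S
        · rw [if_pos hc2]
          have hmlt : (l:ℕ)%(2*K) < 2*K := Nat.mod_lt _ h2K0
          have h3 := h ((l:ℕ)/(2*K)) hc2 ((l:ℕ)%(2*K)) hmlt
          have h4 : 2*K*((l:ℕ)/(2*K)) + (l:ℕ)%(2*K) = (l:ℕ) := Nat.div_add_mod _ _
          rw [h4] at h3
          exact h3
        · rw [if_neg hc2]; trivial
    rw [hset] at h1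
    rw [h1]
    -- now compute the RHS product
    have hterm : ∀ l : Fin N, P ((fun l : Fin N => Yf (l:ℕ)) l ⁻¹' c l)
        = (fun l : ℕ => if l/(2*K) ∈ S then marg (l%(2*K)) else 1) (l:ℕ) := by
      intro l
      by_cases h : (l:ℕ)/(2*K) ∈ S
      · simp only [hcdef, if_pos h]
        exact hmargY _ _
      · simp only [hcdef, if_neg h]
        simp
    calc ∏ l ∈ (Finset.univ : Finset (Fin N)), P ((fun l : Fin N => Yf (l:ℕ)) l ⁻¹' c l)
        = ∏ l : Fin N, (fun l : ℕ => if l/(2*K) ∈ S then marg (l%(2*K)) else 1) (l:ℕ) :=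
          Finset.prod_congr rfl (fun l _ => hterm l)
      _ = ∏ l ∈ Finset.range N, (if l/(2*K) ∈ S then marg (l%(2*K)) else 1) := by
          exact Fin.prod_univ_eq_prod_range
            (fun l => if l/(2*K) ∈ S then marg (l%(2*K)) else 1) N
      _ = ∏ i ∈ Finset.range n, ∏ j ∈ Finset.range (2*K),
            (if (2*K*i+j)/(2*K) ∈ S then marg ((2*K*i+j)%(2*K)) else 1) := by
          rw [hNdef]; exact prod_block (2*K) n _
      _ = ∏ i ∈ Finset.range n, (if i ∈ S then q else 1) := by
          apply Finset.prod_congr rfl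
          intro i _
          by_cases hiS : i ∈ S
          · rw [if_pos hiS]
            rw [hqdef]
            apply Finset.prod_congr rfl
            intro j hj
            have hj' : j < 2*K := Finset.mem_range.mp hj
            have hdiv : (2*K*i+j)/(2*K) = i := by
              rw [Nat.mul_add_div h2K0, Nat.div_eq_of_lt hj', add_zero]
            have hmod : (2*K*i+j)%(2*K) = j := by
              rw [Nat.mul_add_mod]; exact Nat.mod_eq_of_lt hj'
            rw [hdiv, hmod, if_pos hiS]
          · rw [if_neg hiS]
            apply Finset.prod_eq_one
            intro j hj
            have hj' : j < 2*K := Finset.mem_range.mp hj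
            have hdiv : (2*K*i+j)/(2*K) = i := by
              rw [Nat.mul_add_div h2K0, Nat.div_eq_of_lt hj', add_zero]
            rw [hdiv, if_neg hiS]
      _ = ∏ i ∈ Finset.filter (fun i => i ∈ S) (Finset.range n), q :=
          (Finset.prod_filter _ _).symm
      _ = ∏ _i ∈ S, q := by
          congr 1
          rw [Finset.filter_mem_eq_inter]
          rw [Finset.inter_comm]
          apply Finset.inter_eq_left.mpr
          intro i hi
          exact Finset.mem_range.mpr (hS i hi)
  have hqY : ∀ i, i < n → P (EY i) = q := by
    intro i hi
    have h := hprodS {i} (by intro i' hi'; rw [Finset.mem_singleton] at hi'; omega)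
    simpa using h
  have hqZ : ∀ i, i < n → P (EZ i) = q := by
    intro i hi; rw [hEZY i]; exact hqY i hi
  -- independence of the events EZ
  have hiis : iIndepSets (fun i : Fin n => {EZ (i:ℕ)}) P := by
    rw [iIndepSets_iff]
    intro s f hf
    have hfeq : ∀ i ∈ s, f i = EZ (i:ℕ) := by
      intro i hi
      have := hf i hi
      simpa using this
    have h1 : (⋂ i ∈ s, f i) = ⋂ i ∈ s, EZ (i:ℕ) := by
      apply Set.iInter₂_congr hfeq
    rw [h1]
    have h2 : (⋂ i ∈ s, EZ (i:ℕ)) = ⋂ i ∈ (s.image Fin.val), EZ i := by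
      ext ω
      simp only [Set.mem_iInter, Finset.mem_image]
      constructor
      · intro h i hi
        obtain ⟨i', hi', rfl⟩ := hi
        exact h i' hi'
      · intro h i hi
        exact h (i:ℕ) ⟨i, hi, rfl⟩
    rw [h2]
    have h3 : P (⋂ i ∈ (s.image Fin.val), EZ i) = P (⋂ i ∈ (s.image Fin.val), EY i) := by
      apply htrans
      intro ω hωD
      simp only [Set.mem_iInter]
      constructor
      · intro h i hi
        have := h i hi
        simp only [hEZdef, hEYdef, Set.mem_iInter, Set.mem_preimage] at this ⊢
        intro j hj; rw [hωD]; exact this j hj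
      · intro h i hi
        have := h i hi
        simp only [hEZdef, hEYdef, Set.mem_iInter, Set.mem_preimage] at this ⊢
        intro j hj; rw [← hωD]; exact this j hj
    rw [h3]
    have hSsub : ∀ i ∈ s.image Fin.val, i < n := by
      intro i hi
      simp only [Finset.mem_image] at hi
      obtain ⟨i', _, rfl⟩ := hi
      exact i'.2
    rw [hprodS (s.image Fin.val) hSsub]
    rw [Finset.prod_image (by intro a _ b _ hab; exact Fin.ext hab)]
    apply Finset.prod_congr rfl
    intro i hi
    rw [hfeq i hi, hqZ (i:ℕ) i.2]
  have hIndep2 : iIndep (fun i : Fin n => MeasurableSpace.generateFrom {EZ (i:ℕ)}) P := by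
    refine ProbabilityTheory.iIndepSets.iIndep ?_
      (fun i : Fin n => ({EZ (i:ℕ)} : Set (Set Ω))) ?_ ?_ hiis
    · intro i
      apply MeasurableSpace.generateFrom_le
      intro t ht
      rw [Set.mem_singleton_iff] at ht
      rw [ht]
      exact hEZm _
    · intro i
      exact IsPiSystem.singleton _
    · intro i; rfl
  have hcompl : P (⋂ i ∈ (Finset.univ : Finset (Fin n)), (EZ (i:ℕ))ᶜ)
      = ∏ i ∈ (Finset.univ : Finset (Fin n)), P ((EZ (i:ℕ))ᶜ) := by
    refine (iIndep_iff _ _).mp hIndep2 Finset.univ ?_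
    intro i _
    exact MeasurableSet.compl (MeasurableSpace.measurableSet_generateFrom rfl)
  have hcomplval : ∀ i : Fin n, P ((EZ (i:ℕ))ᶜ) = 1 - q := by
    intro i
    rw [prob_compl_eq_one_sub (hEZm _), hqZ (i:ℕ) i.2]
  -- gaussian lower bound on q
  have hqlow : ENNReal.ofReal (pKfun K) ≤ q := by
    rw [hqdef, pKfun]
    have hstep : ∀ j ∈ Finset.range (2*K), ENNReal.ofReal (gstep j) ≤ marg j := by
      intro j _
      have hd := dstep_bound R v hR0 hv0 h6 (j+1) (by omega)
      have hd' : |dstep R v (j+1)| + Real.sqrt τ ≤ ((j:ℝ)+3) * Real.sqrt τ := by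
        rw [← hvdef]
        have : (((j+1:ℕ)):ℝ)+2 = (j:ℝ)+3 := by push_cast; ring
        rw [this] at hd
        exact hd
      have := gauss_interval τ hτ (dstep R v (j+1)) ((j:ℝ)+3) (by positivity) hd'
      rw [hmargdef]
      simp only [hJdef]
      rw [← hvdef] at this
      exact this
    calc ENNReal.ofReal (∏ j ∈ Finset.range (2*K), gstep j)
        = ∏ j ∈ Finset.range (2*K), ENNReal.ofReal (gstep j) := by
          rw [ENNReal.ofReal_prod_of_nonneg]
          intro j _
          exact (by unfold gstep; positivity)
      _ ≤ ∏ j ∈ Finset.range (2*K), marg j := Finset.prod_le_prod' hstep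
  -- conclusion
  have hfinal : (⋂ i ∈ (Finset.univ : Finset (Fin n)), (EZ (i:ℕ))ᶜ) ∪
      {ω | ¬ ∀ l, Yf l ω = Z l ω} ⊇
      {ω | ¬ ∃ i < n, ∀ j < 2*K, Yf (2*K*i+j) ω ∈ J j} := by
    intro ω hω
    by_cases hωD : ∀ l, Yf l ω = Z l ω
    · left
      simp only [Set.mem_iInter, Finset.mem_univ, forall_const]
      intro i
      intro hmem
      apply hω
      refine ⟨(i:ℕ), i.2, ?_⟩
      intro j hj
      simp only [hEZdef, Set.mem_iInter, Set.mem_preimage] at hmem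
      have := hmem j (Finset.mem_range.mpr hj)
      rw [← hωD] at this
      exact this
    · right
      exact hωD
  have hbadeq : {ω | ¬ ∃ i < n, ∀ j < 2*K,
      W (((2*K*i+j+1 : ℕ) : ℝ)*τ) ω - W (((2*K*i+j : ℕ) : ℝ)*τ) ω ∈
        Icc (dstep (4*K*τ) (Real.sqrt τ) (j+1))
          (dstep (4*K*τ) (Real.sqrt τ) (j+1) + Real.sqrt τ)}
      = {ω | ¬ ∃ i < n, ∀ j < 2*K, Yf (2*K*i+j) ω ∈ J j} := rfl
  rw [hbadeq]
  calc P {ω | ¬ ∃ i < n, ∀ j < 2*K, Yf (2*K*i+j) ω ∈ J j}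
      ≤ P ((⋂ i ∈ (Finset.univ : Finset (Fin n)), (EZ (i:ℕ))ᶜ) ∪
          {ω | ¬ ∀ l, Yf l ω = Z l ω}) := measure_mono hfinal
    _ ≤ P (⋂ i ∈ (Finset.univ : Finset (Fin n)), (EZ (i:ℕ))ᶜ) +
          P {ω | ¬ ∀ l, Yf l ω = Z l ω} := measure_union_le _ _
    _ = P (⋂ i ∈ (Finset.univ : Finset (Fin n)), (EZ (i:ℕ))ᶜ) := by rw [hD, add_zero]
    _ = ∏ i ∈ (Finset.univ : Finset (Fin n)), P ((EZ (i:ℕ))ᶜ) := hcompl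
    _ = ∏ _i ∈ (Finset.univ : Finset (Fin n)), (1 - q) :=
        Finset.prod_congr rfl (fun i _ => hcomplval i)
    _ = (1 - q)^n := by rw [Finset.prod_const, Finset.card_univ, Fintype.card_fin]
    _ ≤ (ENNReal.ofReal (1 - pKfun K))^n := by
        apply pow_le_pow_left₀
        · positivity
        · calc 1 - q ≤ 1 - ENNReal.ofReal (pKfun K) := tsub_le_tsub_left hqlow 1
            _ = ENNReal.ofReal 1 - ENNReal.ofReal (pKfun K) := by rw [ENNReal.ofReal_one]
            _ = ENNReal.ofReal (1 - pKfun K) := (ENNReal.ofReal_sub _ (pK_pos K).le).symm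
    _ = ENNReal.ofReal ((1 - pKfun K)^n) := by
        rw [ENNReal.ofReal_pow]
        have := pK_le_one K
        linarith

set_option maxHeartbeats 4000000 in
/-- Let `f : [0,1] → ℝ` be `C¹` with `f ≥ 1` and let
`B_f(t) = f(t) W(t) - ∫₀ᵗ W(x) f'(x) dx` (the Itô integral `∫₀ᵗ f dW` after integration
by parts). Then the graph of `B_f` over `[0,1]` almost surely has Assouad dimension `2`:
for every `s < 2` it is not `s`-homogeneous. -/
theorem assouad_stochastic_integral_graph {Ω : Type*} [MeasurableSpace Ω]
    (P : Measure Ω) [IsProbabilityMeasure P]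
    (W : ℝ → Ω → ℝ) (hW : IsWienerProcess P W)
    (f f' : ℝ → ℝ)
    (hderiv : ∀ x ∈ Icc (0 : ℝ) 1, HasDerivWithinAt f (f' x) (Icc (0 : ℝ) 1) x)
    (hf'cont : ContinuousOn f' (Icc (0 : ℝ) 1))
    (hf1 : ∀ x ∈ Icc (0 : ℝ) 1, 1 ≤ f x)
    (B : ℝ → Ω → ℝ)
    (hB : ∀ t ∈ Icc (0 : ℝ) 1, ∀ ω,
      B t ω = f t * W t ω - ∫ x in (0 : ℝ)..t, W x ω * f' x)
    (G : Ω → Set (EuclideanSpace ℝ (Fin 2)))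
    (hG : ∀ ω, G ω = {p | ∃ t ∈ Icc (0 : ℝ) 1, p 0 = t ∧ p 1 = B t ω}) :
    ∀ᵐ ω ∂P, ∀ s < (2 : ℝ), ∀ C > (0 : ℝ), ∃ x ∈ G ω, ∃ R r : ℝ, 0 < r ∧ r ≤ R ∧
      smallestCoverExceeds (closedBall x R ∩ G ω) r (C * (R / r) ^ s) := by
  classical
  -- bound for f'
  obtain ⟨M0, hM0⟩ := isCompact_Icc.exists_bound_of_continuousOn hf'cont
  set M' : ℝ := max M0 0 with hM'def
  have hM'0 : (0:ℝ) ≤ M' := le_max_right _ _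
  have hM' : ∀ x ∈ Icc (0:ℝ) 1, |f' x| ≤ M' := by
    intro x hx
    calc |f' x| = ‖f' x‖ := (Real.norm_eq_abs _).symm
      _ ≤ M0 := hM0 x hx
      _ ≤ M' := le_max_left _ _
  -- almost sure pattern existence, for every K at some arbitrarily large window count
  have hae1 : ∀ K n₀ : ℕ, 1 ≤ K → ∀ᵐ ω ∂P, ∃ n, n₀+1 ≤ n ∧ ∃ i < n, ∀ j < 2*K,
      W (((2*K*i+j+1 : ℕ):ℝ)*τf K n) ω - W (((2*K*i+j : ℕ):ℝ)*τf K n) ω ∈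
        Icc (dstep (4*K*τf K n) (Real.sqrt (τf K n)) (j+1))
            (dstep (4*K*τf K n) (Real.sqrt (τf K n)) (j+1) + Real.sqrt (τf K n)) := by
    intro K n₀ hK
    rw [ae_iff]
    have hbound : ∀ n : ℕ, n₀+1 ≤ n →
        P {ω | ¬ ∃ n, n₀+1 ≤ n ∧ ∃ i < n, ∀ j < 2*K,
          W (((2*K*i+j+1 : ℕ):ℝ)*τf K n) ω - W (((2*K*i+j : ℕ):ℝ)*τf K n) ω ∈
            Icc (dstep (4*K*τf K n) (Real.sqrt (τf K n)) (j+1))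
                (dstep (4*K*τf K n) (Real.sqrt (τf K n)) (j+1) + Real.sqrt (τf K n))}
          ≤ ENNReal.ofReal ((1 - pKfun K)^n) := by
      intro n hn
      have hn1 : 1 ≤ n := by omega
      obtain ⟨hτ0, hτ6, _⟩ := tau_cond K n hK hn1
      refine le_trans (measure_mono ?_) (scale_prob P W hW K n hK hn1 (τf K n) hτ0 hτ6)
      intro ω hω
      simp only [Set.mem_setOf_eq] at hω ⊢
      intro hcon
      apply hω
      obtain ⟨i, hi, hp⟩ := hcon
      exact ⟨n, hn, i, hi, hp⟩
    have hp0 := pK_pos K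
    have hp1 := pK_le_one K
    have htend : Filter.Tendsto (fun n : ℕ => ENNReal.ofReal ((1 - pKfun K)^n))
        Filter.atTop (nhds 0) := by
      have h1 : Filter.Tendsto (fun n : ℕ => (1 - pKfun K)^n) Filter.atTop (nhds 0) :=
        tendsto_pow_atTop_nhds_zero_of_lt_one (by linarith) (by linarith)
      have h2 := ENNReal.tendsto_ofReal h1
      simpa using h2
    refine le_antisymm ?_ (by positivity)
    exact ge_of_tendsto htend (Filter.eventually_atTop.mpr ⟨n₀+1, hbound⟩)
  have hae2 : ∀ᵐ ω ∂P, ∀ K : ℕ, ∀ n₀ : ℕ, 1 ≤ K → ∃ n, n₀+1 ≤ n ∧ ∃ i < n, ∀ j < 2*K,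
      W (((2*K*i+j+1 : ℕ):ℝ)*τf K n) ω - W (((2*K*i+j : ℕ):ℝ)*τf K n) ω ∈
        Icc (dstep (4*K*τf K n) (Real.sqrt (τf K n)) (j+1))
            (dstep (4*K*τf K n) (Real.sqrt (τf K n)) (j+1) + Real.sqrt (τf K n)) := by
    rw [ae_all_iff]
    intro K
    rw [ae_all_iff]
    intro n₀
    by_cases hK : 1 ≤ K
    · exact (hae1 K n₀ hK).mono (fun ω h _ => h)
    · exact Filter.Eventually.of_forall (fun ω h => absurd h hK)
  filter_upwards [hW.2.2.2, hae2] with ω hcont hgood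
  intro s hs C hC
  obtain ⟨K, hK1, hKlt⟩ := exists_K s C hs hC
  have hK0 : (0:ℝ) < (K:ℝ) := by exact_mod_cast hK1
  -- uniform continuity of the path
  have hε : (0:ℝ) < 1/(M'+1) := by positivity
  have huc := (isCompact_Icc (a := (0:ℝ)) (b := 1)).uniformContinuousOn_of_continuous
    hcont.continuousOn
  rw [Metric.uniformContinuousOn_iff_le] at huc
  obtain ⟨δ, hδ0, hδ⟩ := huc (1/(M'+1)) hε
  -- choose n₀ large enough
  obtain ⟨n₀, hn₀⟩ := exists_nat_ge (1/(576*(K:ℝ)*δ))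
  obtain ⟨n, hn, i, hi, hpatt⟩ := hgood K n₀ hK1
  have hn1 : 1 ≤ n := by omega
  obtain ⟨hτ0, hτ6, hτfit⟩ := tau_cond K n hK1 hn1
  set τ : ℝ := τf K n with hτdef
  set R : ℝ := 4*(K:ℝ)*τ with hRdef
  have hR0 : (0:ℝ) < R := by rw [hRdef]; exact mul_pos (by nlinarith) hτ0
  set a : ℝ := ((2*K*i : ℕ):ℝ)*τ with hadef
  have ha0 : 0 ≤ a := by rw [hadef]; positivity
  have hifit : a + 2*(K:ℝ)*τ ≤ 1 := by
    have h1 : ((2*K*i : ℕ):ℝ) + 2*(K:ℝ) ≤ 2*(K:ℝ)*(n:ℝ) := by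
      push_cast
      have : (i:ℝ) + 1 ≤ (n:ℝ) := by exact_mod_cast hi
      nlinarith
    calc a + 2*(K:ℝ)*τ = (((2*K*i : ℕ):ℝ) + 2*(K:ℝ)) * τ := by rw [hadef]; ring
      _ ≤ (2*(K:ℝ)*(n:ℝ)) * τ := mul_le_mul_of_nonneg_right h1 hτ0.le
      _ ≤ 1 := by calc 2*(K:ℝ)*(n:ℝ)*τ = 2*(K:ℝ)*(n:ℝ)*τf K n := rfl
                    _ ≤ 1 := hτfit
  -- the T ≤ δ bound
  have hnR1 : (1:ℝ) ≤ (n:ℝ) := by exact_mod_cast hn1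
  have hK2 : (0:ℝ) < (K:ℝ)^2 := pow_pos hK0 2
  have hDpos : (0:ℝ) < 1152*(K:ℝ)^2*(n:ℝ) := by nlinarith
  have hTδ : 2*(K:ℝ)*τ ≤ δ := by
    have h1 : ((n₀:ℝ)) + 1 ≤ (n:ℝ) := by exact_mod_cast hn
    have hnn : 1/(576*(K:ℝ)*δ) < (n:ℝ) := by linarith
    have h2 : 1 < (n:ℝ)*(576*(K:ℝ)*δ) := by
      rw [div_lt_iff₀ (by positivity)] at hnn
      linarith
    have hτval : τ = (1152*(K:ℝ)^2*(n:ℝ))⁻¹ := rfl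
    rw [hτval]
    rw [show 2*(K:ℝ)*(1152*(K:ℝ)^2*(n:ℝ))⁻¹ = (2*(K:ℝ))/(1152*(K:ℝ)^2*(n:ℝ)) by ring]
    rw [div_le_iff₀ hDpos]
    nlinarith [mul_lt_mul_of_pos_left h2 (by positivity : (0:ℝ) < 2*(K:ℝ))]
  -- oscillation bound
  have hosc : ∀ u ∈ Icc a (a + 2*(K:ℝ)*τ), |W u ω - W a ω| ≤ 1/(M'+1) := by
    intro u hu
    have hu1 : u ∈ Icc (0:ℝ) 1 := ⟨le_trans ha0 hu.1, le_trans hu.2 hifit⟩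
    have ha1 : a ∈ Icc (0:ℝ) 1 := ⟨ha0, by nlinarith [hu.1, hu.2, hifit, hτ0, hK0]⟩
    have hd : dist u a ≤ δ := by
      rw [Real.dist_eq, abs_of_nonneg (by linarith [hu.1])]
      linarith [hu.2, hTδ]
    have := hδ u hu1 a ha1 hd
    rwa [Real.dist_eq] at this
  -- pattern ⇒ down/up excursions
  have hdu := pattern_down_up (fun t => W t ω) K hK1 τ R (Real.sqrt τ) i
    (by
      intro j hj
      have := hpatt j hj
      rw [hRdef]
      exact this)
  have hdown : ∀ j : ℕ, j < K →
      (fun t => W t ω) (a + (2*(j:ℝ)+1)*τ) - (fun t => W t ω) a ≤ -R := by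
    intro j hj
    have h := hdu.1 j hj
    have he : ((2*K*i+(2*j+1) : ℕ):ℝ)*τ = a + (2*(j:ℝ)+1)*τ := by
      rw [hadef]; push_cast; ring
    rw [he] at h
    exact h
  have hup : ∀ j : ℕ, j < K →
      (fun t => W t ω) (a + (2*(j:ℝ)+2)*τ) - (fun t => W t ω) a ≥ 5*R := by
    intro j hj
    have h := hdu.2 j hj
    have he : ((2*K*i+(2*j+2) : ℕ):ℝ)*τ = a + (2*(j:ℝ)+2)*τ := by
      rw [hadef]; push_cast; ring
    rw [he] at h
    exact h
  -- apply the deterministic window lemma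
  obtain ⟨pts, hpts, hsep⟩ := window_lemma f f' hderiv hf'cont hf1 M' hM'0 hM'
    (fun t => W t ω) hcont (fun t => B t ω)
    (fun t ht => hB t ht ω) K hK1 τ hτ0 a ha0 hifit hosc R hRdef hdown hup
  -- conclude
  refine ⟨ept a (B a ω), ?_, 5*R, R/(5*(K:ℝ)), by positivity, ?_, ?_⟩
  · rw [hG]
    refine ⟨a, ⟨ha0, by nlinarith [hτ0, hK0, hifit]⟩, ept_zero _ _, ept_one _ _⟩
  · have hK1R : (1:ℝ) ≤ (K:ℝ) := by exact_mod_cast hK1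
    have h1 : R/(5*(K:ℝ)) ≤ R := by
      apply div_le_self hR0.le
      linarith
    linarith
  · intro 𝒰 hdiam hcov
    have hmem : ∀ q : Fin K × Fin K, pts q ∈ closedBall (ept a (B a ω)) (5*R) ∩ G ω := by
      intro q
      obtain ⟨hq1, hq2, hq3⟩ := hpts q
      constructor
      · exact hq3
      · rw [hG]
        exact ⟨pts q 0, hq1, rfl, hq2⟩
    have hcount := sep_cover pts (closedBall (ept a (B a ω)) (5*R) ∩ G ω)
      (R/(5*(K:ℝ))) (by positivity) hmem hsep 𝒰 hdiam hcov
    have hcard : ((K*K : ℕ):ℝ) ≤ (𝒰.card : ℝ) := by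
      have : K*K ≤ 𝒰.card := by
        calc K*K = Fintype.card (Fin K × Fin K) := by
              simp [Fintype.card_prod]
          _ ≤ 𝒰.card := hcount
      exact_mod_cast this
    have hratio : 5*R/(R/(5*(K:ℝ))) = 25*(K:ℝ) := by
      field_simp
      ring
    calc C * (5*R/(R/(5*(K:ℝ))))^s = C * (25*(K:ℝ))^s := by rw [hratio]
      _ < (K:ℝ)^2 := hKlt
      _ = ((K*K : ℕ):ℝ) := by push_cast; ring
      _ ≤ (𝒰.card : ℝ) := hcard
end

section
/- Let W = (W(t))_{t ≥ 0} be a standard Wiener process. Then almost surely there exist a sequence of pairwise disjoint closed intervals I_i = [a_i, a_i + |I_i|] ⊆ [0,1] and a sequence of positive integers n_i with n_i → ∞ such that for every i and every k ∈ {0, 1, ..., n_i − 1} one has (−1)^k · ( W(a_i + (k+1)|I_i|/n_i) − W(a_i + k·|I_i|/n_i) ) ≥ |I_i|^{1/2}; that is, over each interval I_i the increments of W along the n_i equal subintervals alternate in sign (positive for even k, negative for odd k) and each has absolute value at least |I_i|^{1/2}. -/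
open MeasureTheory ProbabilityTheory Metric Set Filter
open scoped NNReal ENNReal

lemma gauss_pos {v : ℝ≥0} (hv : v ≠ 0) {S : Set ℝ} (hS : MeasurableSet S)
    (h0 : volume S ≠ 0) : 0 < gaussianReal 0 v S := by
  rw [gaussianReal_apply _ hv]
  rw [lintegral_pos_iff_support (measurable_gaussianPDF 0 v)]
  have : Function.support (gaussianPDF 0 v) = Set.univ :=
    Set.eq_univ_of_forall fun x => (gaussianPDF_pos 0 hv x).ne'
  rw [this, Measure.restrict_apply_univ]
  exact h0.bot_lt

lemma gauss_scale {v : ℝ≥0} (hv : v ≠ 0) {S : Set ℝ} (hS : MeasurableSet S) :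
    gaussianReal 0 v S = gaussianReal 0 1 ((fun x => Real.sqrt v * x) ⁻¹' S) := by
  have h : (gaussianReal 0 1).map (Real.sqrt v * ·) = gaussianReal 0 v := by
    rw [gaussianReal_map_const_mul]
    congr 1
    · simp
    · ext
      simp [Real.sq_sqrt v.coe_nonneg]
  rw [← h, Measure.map_apply (measurable_const_mul _) hS]

lemma zigzag_aux {Ω : Type*} [MeasurableSpace Ω]
    (P : Measure Ω) [IsProbabilityMeasure P]
    (W : ℝ → Ω → ℝ) (hW : IsWienerProcess P W)
    (N : ℕ) (hN : 0 < N) (s ℓ : ℕ → ℝ)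
    (hℓ : ∀ m, 0 < ℓ m) (hs0 : 0 ≤ s 0)
    (hgap : ∀ m, s m + ℓ m < s (m + 1)) :
    ∀ᵐ ω ∂P, ∃ m, ∀ k < N, Real.sqrt (ℓ m) ≤ (-1 : ℝ) ^ k *
      (W (s m + ((k : ℝ) + 1) * (ℓ m / (N : ℝ))) ω
        - W (s m + (k : ℝ) * (ℓ m / (N : ℝ))) ω) := by
  have hNr : (0 : ℝ) < (N : ℝ) := by exact_mod_cast hN
  -- subdivision points within candidate intervals
  set u : ℕ → ℕ → ℝ := fun m r => s m + (r : ℝ) * (ℓ m / (N : ℝ)) with hu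
  -- global grid
  set T : ℕ → ℝ := fun j => u (j / (N + 1)) (j % (N + 1)) with hT
  have hdiv : ∀ m r, r ≤ N → ((N + 1) * m + r) / (N + 1) = m := by
    intro m r hr
    rw [Nat.mul_add_div (Nat.succ_pos N), Nat.div_eq_of_lt (Nat.lt_succ_of_le hr), add_zero]
  have hmod : ∀ m r, r ≤ N → ((N + 1) * m + r) % (N + 1) = r := by
    intro m r hr
    rw [Nat.mul_add_mod, Nat.mod_eq_of_lt (Nat.lt_succ_of_le hr)]
  have hT_eval : ∀ m r, r ≤ N → T ((N + 1) * m + r) = u m r := by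
    intro m r hr
    simp only [hT, hdiv m r hr, hmod m r hr]
  have hu_mono : ∀ m, ∀ r r' : ℕ, r < r' → u m r < u m r' := by
    intro m r r' h
    have : (r : ℝ) < (r' : ℝ) := by exact_mod_cast h
    have hpos : 0 < ℓ m / (N : ℝ) := div_pos (hℓ m) hNr
    simp only [hu]
    nlinarith
  have hu_last : ∀ m, u m N = s m + ℓ m := by
    intro m
    simp only [hu]
    rw [mul_div_cancel₀ _ hNr.ne']
  have hTmono : StrictMono T := by
    apply strictMono_nat_of_lt_succ
    intro j
    obtain ⟨m, r, hr, rfl⟩ : ∃ m r, r ≤ N ∧ (N + 1) * m + r = j :=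
      ⟨j / (N + 1), j % (N + 1), Nat.lt_succ_iff.1 (Nat.mod_lt _ (Nat.succ_pos N)),
        Nat.div_add_mod j (N + 1)⟩
    rcases lt_or_eq_of_le hr with hr' | hEq
    · have h1 : (N + 1) * m + r + 1 = (N + 1) * m + (r + 1) := by ring
      rw [hT_eval m r hr, h1, hT_eval m (r + 1) hr']
      exact hu_mono m r (r + 1) (Nat.lt_succ_self r)
    · rw [hEq]
      have h1 : (N + 1) * m + N + 1 = (N + 1) * (m + 1) + 0 := by ring
      rw [hT_eval m N le_rfl, h1, hT_eval (m + 1) 0 (Nat.zero_le N), hu_last]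
      simpa [hu] using hgap m
  have hs_nonneg : ∀ m, 0 ≤ s m := by
    intro m
    induction m with
    | zero => exact hs0
    | succ m ih => nlinarith [hgap m, hℓ m]
  have hu_nonneg : ∀ m r, 0 ≤ u m r := by
    intro m r
    have : 0 ≤ (r : ℝ) * (ℓ m / (N : ℝ)) :=
      mul_nonneg (Nat.cast_nonneg r) (div_pos (hℓ m) hNr).le
    simp only [hu]; linarith [hs_nonneg m]
  have hT0 : ∀ j, 0 ≤ T j := fun j => hu_nonneg _ _
  -- increments
  set inc : ℕ → Ω → ℝ := fun j ω => W (T (j + 1)) ω - W (T j) ω with hinc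
  have hmapj : ∀ m r, r < N →
      Measure.map (inc ((N + 1) * m + r)) P = gaussianReal 0 (ℓ m / (N : ℝ)).toNNReal := by
    intro m r hr
    have h1 : T ((N + 1) * m + r) = u m r := hT_eval m r hr.le
    have h2 : T ((N + 1) * m + r + 1) = u m (r + 1) := by
      have : (N + 1) * m + r + 1 = (N + 1) * m + (r + 1) := by ring
      rw [this, hT_eval m (r + 1) hr]
    have h3 : u m (r + 1) = u m r + ℓ m / (N : ℝ) := by
      simp only [hu]; push_cast; ring
    have := hW.2.2.1 (u m r) (ℓ m / (N : ℝ)) (hu_nonneg m r) (div_pos (hℓ m) hNr).le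
    rw [← this]
    congr 1
    funext ω
    rw [hinc]
    simp only [h1, h2, h3]
  have haem : ∀ m r, r < N → AEMeasurable (inc ((N + 1) * m + r)) P := by
    intro m r hr
    by_contra h
    have h0 := Measure.map_of_not_aemeasurable h
    rw [hmapj m r hr] at h0
    have h1 : (gaussianReal 0 (ℓ m / (N : ℝ)).toNNReal) Set.univ = 1 := measure_univ
    rw [h0] at h1
    simp at h1
  set B : ℕ → ℕ → Set ℝ := fun m r => {x | Real.sqrt (ℓ m) ≤ (-1 : ℝ) ^ r * x} with hB
  have hBmeas : ∀ m r, MeasurableSet (B m r) :=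
    fun m r => measurableSet_le measurable_const (measurable_id.const_mul _)
  set q : ℕ → ℝ≥0∞ := fun r => gaussianReal 0 1 {x | Real.sqrt (N : ℝ) ≤ (-1 : ℝ) ^ r * x}
    with hq
  have hqmeas : ∀ r : ℕ, MeasurableSet {x : ℝ | Real.sqrt (N : ℝ) ≤ (-1 : ℝ) ^ r * x} :=
    fun r => measurableSet_le measurable_const (measurable_id.const_mul _)
  have hq_pos : ∀ r, 0 < q r := by
    intro r
    refine gauss_pos one_ne_zero (hqmeas r) ?_
    rcases Nat.even_or_odd r with he | ho
    · have h1 : {x : ℝ | Real.sqrt (N : ℝ) ≤ (-1 : ℝ) ^ r * x} = Ici (Real.sqrt (N : ℝ)) := by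
        ext x; simp [he.neg_one_pow]
      rw [h1, Real.volume_Ici]
      simp
    · have h1 : {x : ℝ | Real.sqrt (N : ℝ) ≤ (-1 : ℝ) ^ r * x} = Iic (-Real.sqrt (N : ℝ)) := by
        ext x
        simp only [ho.neg_one_pow, mem_setOf_eq, mem_Iic, neg_one_mul]
        constructor <;> intro h <;> linarith
      rw [h1, Real.volume_Iic]
      simp
  have hq_le_one : ∀ r, q r ≤ 1 := fun r => prob_le_one
  have hPA : ∀ m r, r < N → P (inc ((N + 1) * m + r) ⁻¹' B m r) = q r := by
    intro m r hr
    have hv : (ℓ m / (N : ℝ)).toNNReal ≠ 0 := by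
      simp only [ne_eq, Real.toNNReal_eq_zero, not_le]
      exact div_pos (hℓ m) hNr
    rw [← Measure.map_apply_of_aemeasurable (haem m r hr) (hBmeas m r), hmapj m r hr,
      gauss_scale hv (hBmeas m r)]
    congr 1
    have hcoe : ((ℓ m / (N : ℝ)).toNNReal : ℝ) = ℓ m / (N : ℝ) :=
      Real.coe_toNNReal _ (div_pos (hℓ m) hNr).le
    have hσpos : 0 < Real.sqrt (ℓ m / (N : ℝ)) := Real.sqrt_pos.2 (div_pos (hℓ m) hNr)
    have hsq : Real.sqrt (ℓ m) / Real.sqrt (ℓ m / (N : ℝ)) = Real.sqrt (N : ℝ) := by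
      rw [← Real.sqrt_div (hℓ m).le]
      congr 1
      rw [div_div_eq_mul_div, mul_comm, mul_div_assoc, div_self (hℓ m).ne', mul_one]
    ext x
    simp only [mem_preimage, hB, mem_setOf_eq, hcoe]
    rw [show (-1 : ℝ) ^ r * (Real.sqrt (ℓ m / (N : ℝ)) * x)
        = Real.sqrt (ℓ m / (N : ℝ)) * ((-1 : ℝ) ^ r * x) by ring,
      ← div_le_iff₀' hσpos, hsq]
  classical
  set E : ℕ → Set Ω := fun m => ⋂ r ∈ Finset.range N, inc ((N + 1) * m + r) ⁻¹' B m r with hE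
  have hE_mem : ∀ m ω, ω ∈ E m ↔ ∀ k < N, Real.sqrt (ℓ m) ≤ (-1 : ℝ) ^ k *
      (W (s m + ((k : ℝ) + 1) * (ℓ m / (N : ℝ))) ω
        - W (s m + (k : ℝ) * (ℓ m / (N : ℝ))) ω) := by
    intro m ω
    simp only [hE, Set.mem_iInter, Finset.mem_range, mem_preimage, hB, mem_setOf_eq]
    apply forall_congr'
    intro r
    apply imp_congr_right
    intro hr
    have h1 : T ((N + 1) * m + r) = u m r := hT_eval m r hr.le
    have h2 : T ((N + 1) * m + r + 1) = u m (r + 1) := by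
      rw [show (N + 1) * m + r + 1 = (N + 1) * m + (r + 1) by ring, hT_eval m (r + 1) hr]
    simp only [hinc, h1, h2, hu]
    push_cast
    exact Iff.rfl
  have hE_null : ∀ m, NullMeasurableSet (E m) P := by
    intro m
    rw [hE]
    refine NullMeasurableSet.biInter (Finset.range N).countable_toSet ?_
    intro r hr
    exact (haem m r (Finset.mem_range.1 hr)).nullMeasurable (hBmeas m r)
  set ρ : ℝ≥0∞ := ∏ r ∈ Finset.range N, q r with hρ
  have hρ_pos : 0 < ρ := CanonicallyOrderedAdd.prod_pos.2 fun r _ => hq_pos r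
  have hρ_le_one : ρ ≤ 1 := by
    rw [hρ]
    calc ∏ r ∈ Finset.range N, q r ≤ ∏ r ∈ Finset.range N, 1 :=
          Finset.prod_le_prod' fun r _ => hq_le_one r
      _ = 1 := Finset.prod_const_one
  have hPA' : ∀ jn : ℕ, jn % (N + 1) < N →
      P (inc jn ⁻¹' B (jn / (N + 1)) (jn % (N + 1))) = q (jn % (N + 1)) := by
    intro jn h
    have h2 := hPA (jn / (N + 1)) (jn % (N + 1)) h
    rwa [Nat.div_add_mod] at h2
  have hprod : ∀ F : Finset ℕ, P (⋂ m ∈ F, E m) = ρ ^ F.card := by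
    intro F
    set M := F.sup id + 1 with hM
    have hFM : ∀ m ∈ F, m < M := fun m hm => Nat.lt_succ_of_le (Finset.le_sup (f := id) hm)
    have hbound : ∀ m r, m ∈ F → r < N → (N + 1) * m + r < (N + 1) * M := by
      intro m r hm hr
      calc (N + 1) * m + r < (N + 1) * m + (N + 1) := by omega
        _ = (N + 1) * (m + 1) := by ring
        _ ≤ (N + 1) * M := Nat.mul_le_mul_left _ (hFM m hm)
    have h_ind := hW.2.1 ((N + 1) * M) (fun j => T (j : ℕ)) (hT0 _)
      (hTmono.comp Fin.val_strictMono)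
    have h_ind' : iIndepFun
        (fun j : Fin ((N + 1) * M) => inc (j : ℕ)) P := h_ind
    set S : Finset (Fin ((N + 1) * M)) := Finset.univ.filter
      (fun j => (j : ℕ) % (N + 1) < N ∧ (j : ℕ) / (N + 1) ∈ F) with hS
    have hEq : (⋂ m ∈ F, E m)
        = ⋂ j ∈ S, inc (j : ℕ) ⁻¹' B ((j : ℕ) / (N + 1)) ((j : ℕ) % (N + 1)) := by
      ext ω
      simp only [Set.mem_iInter, hE, Finset.mem_range, hS, Finset.mem_filter, Finset.mem_univ,
        true_and, mem_preimage]
      constructor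
      · rintro h j ⟨h1, h2⟩
        have h3 := h _ h2 ((j : ℕ) % (N + 1)) h1
        rwa [Nat.div_add_mod (j : ℕ) (N + 1)] at h3
      · intro h m hm r hr
        have hb := hbound m r hm hr
        have h3 := h ⟨(N + 1) * m + r, hb⟩
          ⟨by simpa [hmod m r hr.le] using hr, by simpa [hdiv m r hr.le] using hm⟩
        simpa [hdiv m r hr.le, hmod m r hr.le] using h3
    rw [hEq, h_ind'.meas_biInter (fun j _ => ⟨B ((j : ℕ) / (N + 1)) ((j : ℕ) % (N + 1)),
      hBmeas _ _, rfl⟩)]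
    have hSP : (∏ j ∈ S, P (inc (j : ℕ) ⁻¹' B ((j : ℕ) / (N + 1)) ((j : ℕ) % (N + 1))))
        = ∏ p ∈ F ×ˢ Finset.range N, q p.2 := by
      refine Finset.prod_bij'
        (fun j _ => (((j : ℕ) / (N + 1)), ((j : ℕ) % (N + 1))))
        (fun p hp => (⟨(N + 1) * p.1 + p.2,
          hbound p.1 p.2 (Finset.mem_product.1 hp).1
            (Finset.mem_range.1 (Finset.mem_product.1 hp).2)⟩ : Fin ((N + 1) * M)))
        ?_ ?_ ?_ ?_ ?_
      · intro j hj
        rw [hS, Finset.mem_filter] at hj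
        exact Finset.mem_product.2 ⟨hj.2.2, Finset.mem_range.2 hj.2.1⟩
      · intro p hp
        rw [Finset.mem_product] at hp
        have hr := Finset.mem_range.1 hp.2
        rw [hS, Finset.mem_filter]
        exact ⟨Finset.mem_univ _, by simpa [hmod p.1 p.2 hr.le] using hr,
          by simpa [hdiv p.1 p.2 hr.le] using hp.1⟩
      · intro j hj
        apply Fin.ext
        exact Nat.div_add_mod (j : ℕ) (N + 1)
      · intro p hp
        rw [Finset.mem_product] at hp
        have hr := Finset.mem_range.1 hp.2
        ext
        · exact hdiv p.1 p.2 hr.le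
        · exact hmod p.1 p.2 hr.le
      · intro j hj
        rw [hS, Finset.mem_filter] at hj
        exact hPA' (j : ℕ) hj.2.1
    rw [hSP, Finset.prod_product]
    simp only []
    rw [show (∏ m ∈ F, ∏ r ∈ Finset.range N, q r) = ∏ m ∈ F, ρ from rfl,
      Finset.prod_const]
  have hfin : ∀ x : ℝ≥0∞, x ≤ 1 → x ≠ ⊤ := fun x hx => (lt_of_le_of_lt hx (by simp)).ne
  have hmix : ∀ G F : Finset ℕ, Disjoint F G →
      P ((⋂ m ∈ F, E m) ∩ (⋂ m ∈ G, (E m)ᶜ)) = ρ ^ F.card * (1 - ρ) ^ G.card := by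
    intro G
    induction G using Finset.induction_on with
    | empty =>
      intro F _
      simp only [Finset.notMem_empty, Set.iInter_of_empty, Set.iInter_univ, Set.inter_univ,
        Finset.card_empty, pow_zero, mul_one]
      exact hprod F
    | @insert a G' ha IH =>
      intro F hdisj
      have haF : a ∉ F := fun h => (Finset.disjoint_left.1 hdisj h) (Finset.mem_insert_self a G')
      have hFG' : Disjoint F G' :=
        Finset.disjoint_left.2 fun m hm hm' =>
          Finset.disjoint_left.1 hdisj hm (Finset.mem_insert_of_mem hm')
      have hFaG' : Disjoint (insert a F) G' := by
        rw [Finset.disjoint_left]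
        intro m hm hm'
        rcases Finset.mem_insert.1 hm with rfl | hm2
        · exact ha hm'
        · exact Finset.disjoint_left.1 hdisj hm2 (Finset.mem_insert_of_mem hm')
      set Y := (⋂ m ∈ F, E m) ∩ (⋂ m ∈ G', (E m)ᶜ) with hY
      have hsplit : P (Y ∩ E a) + P (Y \ E a) = P Y :=
        measure_inter_add_diff₀ Y (hE_null a)
      have hYa : Y ∩ E a = (⋂ m ∈ insert a F, E m) ∩ (⋂ m ∈ G', (E m)ᶜ) := by
        rw [Finset.set_biInter_insert]
        rw [hY]
        ext ω
        simp only [Set.mem_inter_iff, Set.mem_iInter]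
        tauto
      have h1 : P (Y ∩ E a) = ρ ^ (F.card + 1) * (1 - ρ) ^ G'.card := by
        rw [hYa, IH (insert a F) hFaG', Finset.card_insert_of_notMem haF]
      have h2 : P Y = ρ ^ F.card * (1 - ρ) ^ G'.card := IH F hFG'
      have htarget : (⋂ m ∈ F, E m) ∩ (⋂ m ∈ insert a G', (E m)ᶜ) = Y \ E a := by
        rw [Finset.set_biInter_insert, hY, Set.diff_eq]
        ext ω
        simp only [Set.mem_inter_iff, Set.mem_iInter, Set.mem_compl_iff]
        tauto
      rw [htarget]
      have hx_le : ρ ^ F.card * (1 - ρ) ^ G'.card ≤ 1 :=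
        mul_le_one' (pow_le_one' hρ_le_one _) (pow_le_one' (tsub_le_self) _)
      have key : P (Y \ E a) = (1 - ρ) * (ρ ^ F.card * (1 - ρ) ^ G'.card) := by
        have heq : P (Y ∩ E a) + (1 - ρ) * (ρ ^ F.card * (1 - ρ) ^ G'.card) = P Y := by
          rw [h1, h2, pow_succ]
          rw [show ρ ^ F.card * ρ * (1 - ρ) ^ G'.card
              = ρ * (ρ ^ F.card * (1 - ρ) ^ G'.card) by ring]
          rw [← add_mul, add_comm, tsub_add_cancel_of_le hρ_le_one, one_mul]
        have := hsplit.trans heq.symm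
        exact (ENNReal.add_right_inj (hfin _ (le_trans (measure_mono Set.inter_subset_left)
          (le_trans (measure_mono Set.inter_subset_left) prob_le_one)))).1 this
      rw [key, Finset.card_insert_of_notMem ha, pow_succ]
      ring
  -- conclusion
  have hlim : P (⋂ m, (E m)ᶜ) = 0 := by
    have hle : ∀ M : ℕ, P (⋂ m, (E m)ᶜ) ≤ (1 - ρ) ^ M := by
      intro M
      have h1 : (⋂ m, (E m)ᶜ) ⊆ ⋂ m ∈ Finset.range M, (E m)ᶜ := by
        intro ω hω
        simp only [Set.mem_iInter] at hω ⊢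
        intro m _
        exact hω m
      have h2 := hmix (Finset.range M) ∅ (Finset.disjoint_left.2 (by simp))
      simp only [Finset.notMem_empty, Set.iInter_of_empty, Set.iInter_univ, Set.univ_inter,
        Finset.card_empty, pow_zero, one_mul, Finset.card_range] at h2
      exact h2 ▸ measure_mono h1
    have htend : Tendsto (fun M : ℕ => (1 - ρ) ^ M) atTop (nhds 0) :=
      ENNReal.tendsto_pow_atTop_nhds_zero_of_lt_one
        (ENNReal.sub_lt_self (by simp) one_ne_zero hρ_pos.ne')
    exact le_antisymm (ge_of_tendsto' htend hle) zero_le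
  rw [ae_iff]
  have hset : {ω | ¬ ∃ m, ∀ k < N, Real.sqrt (ℓ m) ≤ (-1 : ℝ) ^ k *
      (W (s m + ((k : ℝ) + 1) * (ℓ m / (N : ℝ))) ω
        - W (s m + (k : ℝ) * (ℓ m / (N : ℝ))) ω)} = ⋂ m, (E m)ᶜ := by
    ext ω
    simp only [Set.mem_setOf_eq, not_exists, Set.mem_iInter, Set.mem_compl_iff]
    constructor
    · intro h m hm
      exact h m ((hE_mem m ω).1 hm)
    · intro h m hm
      exact h m ((hE_mem m ω).2 hm)
  rw [hset]
  exact hlim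

/-- Almost surely there are pairwise disjoint intervals `Iᵢ = [aᵢ, aᵢ + Lᵢ] ⊆ [0,1]` and
integers `nᵢ → ∞` such that along the `nᵢ` equal subintervals of `Iᵢ` the increments of `W`
alternate in sign and each has absolute value at least `Lᵢ^{1/2}`. -/
theorem brownian_zigzag_intervals {Ω : Type*} [MeasurableSpace Ω]
    (P : Measure Ω) [IsProbabilityMeasure P]
    (W : ℝ → Ω → ℝ) (hW : IsWienerProcess P W) :
    ∀ᵐ ω ∂P, ∃ (a L : ℕ → ℝ) (n : ℕ → ℕ),
      (∀ i, 0 < L i) ∧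
      (∀ i, Icc (a i) (a i + L i) ⊆ Icc (0 : ℝ) 1) ∧
      (Pairwise fun i j => Disjoint (Icc (a i) (a i + L i)) (Icc (a j) (a j + L j))) ∧
      (∀ i, 0 < n i) ∧
      Tendsto n atTop atTop ∧
      (∀ i, ∀ k < n i,
        Real.sqrt (L i) ≤ (-1 : ℝ) ^ k *
          (W (a i + ((k : ℝ) + 1) * (L i / n i)) ω - W (a i + (k : ℝ) * (L i / n i)) ω)) := by
  set c : ℕ → ℝ := fun t => (1 / 4 : ℝ) ^ t with hc
  have hc_pos : ∀ t, 0 < c t := fun t => pow_pos (by norm_num) t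
  have hc_le_one : ∀ t, c t ≤ 1 := fun t => pow_le_one₀ (by norm_num) (by norm_num)
  have hc_succ : ∀ t, c (t + 1) = c t / 4 := by
    intro t
    simp only [hc, pow_succ]
    ring
  have hc_anti : ∀ a b : ℕ, a ≤ b → c b ≤ c a :=
    fun a b hab => pow_le_pow_of_le_one (by norm_num) (by norm_num) hab
  set b : ℕ → ℝ := fun i => c (i + 1) with hb
  have hb_pos : ∀ i, 0 < b i := fun i => hc_pos _
  set sq : ℕ → ℕ → ℝ := fun i m => b i * (2 - c m) with hsq
  set lq : ℕ → ℕ → ℝ := fun i m => b i * (c m / 4) with hlq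
  have hlq_pos : ∀ i m, 0 < lq i m := fun i m =>
    mul_pos (hb_pos i) (by positivity)
  have hsq_lb : ∀ i m, b i ≤ sq i m := by
    intro i m
    simp only [hsq]
    nlinarith [hb_pos i, hc_le_one m, hc_pos m]
  have hsum_ub : ∀ i m, sq i m + lq i m ≤ 2 * b i := by
    intro i m
    simp only [hsq, hlq]
    nlinarith [hb_pos i, hc_pos m]
  have hmain : ∀ i : ℕ, ∀ᵐ ω ∂P, ∃ m, ∀ k < i + 1,
      Real.sqrt (lq i m) ≤ (-1 : ℝ) ^ k *
        (W (sq i m + ((k : ℝ) + 1) * (lq i m / ((i + 1 : ℕ) : ℝ))) ω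
          - W (sq i m + (k : ℝ) * (lq i m / ((i + 1 : ℕ) : ℝ))) ω) := by
    intro i
    refine zigzag_aux P W hW (i + 1) (Nat.succ_pos i) (sq i) (lq i)
      (hlq_pos i) ?_ ?_
    · simp only [hsq, hc, pow_zero]
      nlinarith [hb_pos i]
    · intro m
      simp only [hsq, hlq]
      rw [hc_succ m]
      nlinarith [hb_pos i, hc_pos m]
  filter_upwards [ae_all_iff.2 hmain] with ω hω
  choose m hm using hω
  refine ⟨fun i => sq i (m i), fun i => lq i (m i), fun i => i + 1,
    fun i => hlq_pos i (m i), ?_, ?_, fun i => Nat.succ_pos i,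
    tendsto_add_atTop_nat 1, fun i k hk => hm i k hk⟩
  · intro i x hx
    rcases hx with ⟨hx1, hx2⟩
    constructor
    · have := hsq_lb i (m i)
      have := hb_pos i
      linarith
    · have h1 := hsum_ub i (m i)
      have h2 : b i ≤ 1 / 4 := by
        calc b i = c (i + 1) := rfl
          _ ≤ c 1 := hc_anti 1 (i + 1) (by omega)
          _ = 1 / 4 := by norm_num [hc]
      linarith
  · have hkey : ∀ i j : ℕ, i < j → sq j (m j) + lq j (m j) < sq i (m i) := by
      intro i j hij
      have h1 : sq j (m j) + lq j (m j) ≤ 2 * b j := hsum_ub j (m j)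
      have h2 : b j ≤ b i / 4 := by
        calc b j = c (j + 1) := rfl
          _ ≤ c (i + 2) := hc_anti (i + 2) (j + 1) (by omega)
          _ = c (i + 1) / 4 := hc_succ (i + 1)
          _ = b i / 4 := rfl
      have h3 : b i ≤ sq i (m i) := hsq_lb i (m i)
      have := hb_pos i
      linarith
    intro i j hij
    rcases lt_or_gt_of_ne hij with h | h
    · refine Set.disjoint_left.2 fun x hx1 hx2 => ?_
      rcases hx1 with ⟨ha1, ha2⟩
      rcases hx2 with ⟨hb1, hb2⟩
      have := hkey i j h
      linarith
    · refine Set.disjoint_left.2 fun x hx1 hx2 => ?_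
      rcases hx1 with ⟨ha1, ha2⟩
      rcases hx2 with ⟨hb1, hb2⟩
      have := hkey j i h
      linarith
end
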